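/- arXiv:0911.0735 — 2 statements merged into one kernel-verified Lean document; each statement's English description precedes it below -/
import Mathlib

section
/- Let S be a set of m−1 distinct positive half-integers, and let λ^{(0)}, λ^{(1)} be as in the context. Then b(λ^{(1)}, λ^{(0)}) = 0; that is, the sum of sign(w) over all triples (p, T, w) with p ∈ ℤ≥0, T ⊆ Δ1+ and w ∈ W_0 such that ν = λ^{(1)} − Σ_{β∈T} β − 2pδ is regular and ν = w·λ^{(0)} vanishes. (Identity (28) of the paper, stating that the g_0-module multiplicity of L^{(0)}_{λ^{(0)}} in V_{λ^{(1)}} is zero, for k = 2m+1.) -/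
/-!
Combinatorics of weights for the orthosymplectic Lie superalgebra
`osp_{2m+1|2} = B(m,1)` (so `k = 2m+1`, `s = 1/2`), with its distinguished
Borel subalgebra.  A weight is a tuple `λ = (λ₀ | λ₁, …, λ_m) ∈ ℚ^{m+1}`,
encoded as `ℚ × (Fin m → ℚ)` (the index `i : Fin m` stands for the coordinate
`λ_{i+1}`).
-/

open Finset

noncomputable section

abbrev Wt (m : ℕ) := ℚ × (Fin m → ℚ)

def deltaW (m : ℕ) : Wt m := (1, 0)

def epsW {m : ℕ} (i : Fin m) : Wt m := (0, Pi.single i 1)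

/-- The ρ-translated weight `λ̃ = λ + ρ`, with
`ρ = (s−m | m−s, m−1−s, …, 1−s)` and `s = 1/2`. -/
def tilde (m : ℕ) (lam : Wt m) : Wt m :=
  (lam.1 + 1 / 2 - m, fun i => lam.2 i + (m : ℚ) - 1 / 2 - ((i : ℕ) : ℚ))

/-- `λ` is integral: `λ₀ ∈ ℤ` and `λ₁, …, λ_m` all in `ℤ` or all in `1/2 + ℤ`. -/
def Integral (m : ℕ) (lam : Wt m) : Prop :=
  (∃ n : ℤ, lam.1 = (n : ℚ)) ∧
    ((∀ i, ∃ n : ℤ, lam.2 i = (n : ℚ)) ∨ ∀ i, ∃ n : ℤ, lam.2 i = (n : ℚ) + 1 / 2)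

/-- `λ` is `g₀`-dominant: `λ₁ ≥ λ₂ ≥ … ≥ λ_m ≥ 0`. -/
def G0Dom (m : ℕ) (lam : Wt m) : Prop :=
  (∀ i j : Fin m, i ≤ j → lam.2 j ≤ lam.2 i) ∧ ∀ i, 0 ≤ lam.2 i

/-- `λ` is atypical: `|λ̃₀| = λ̃_ℓ` for some `ℓ`. -/
def Atypical (m : ℕ) (lam : Wt m) : Prop :=
  ∃ l : Fin m, |(tilde m lam).1| = (tilde m lam).2 l

/-- The atypicality type `S(λ̄) = {λ̃_i : i ≠ ℓ}` of an atypical `g₀`-dominant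
weight `λ` (where `λ̃_ℓ = |λ̃₀|`). -/
def atypType (m : ℕ) (lam : Wt m) : Finset ℚ :=
  (Finset.univ.image fun i => (tilde m lam).2 i).erase |(tilde m lam).1|

/-- `λ` is `g`-dominant: it is integral, `g₀`-dominant, `λ₀ ∈ ℤ≥0`, and
`λ_j = 0` whenever `j > λ₀`. -/
def GDom (m : ℕ) (lam : Wt m) : Prop :=
  Integral m lam ∧ G0Dom m lam ∧ 0 ≤ lam.1 ∧
    ∀ i : Fin m, lam.1 < ((i : ℕ) : ℚ) + 1 → lam.2 i = 0

/-- `λ^σ = (−λ₀ + 2(m−s) | λ₁, …, λ_m)` with `s = 1/2`. -/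
def sigmaW (m : ℕ) (lam : Wt m) : Wt m := (-lam.1 + 2 * (m : ℚ) - 1, lam.2)

/-- `γ` is the atypical root of `λ`: `γ = δ + ε_ℓ` if `λ̃₀ = λ̃_ℓ`, and
`γ = δ − ε_ℓ` if `λ̃₀ = −λ̃_ℓ`. -/
def AtypRoot (m : ℕ) (lam γ : Wt m) : Prop :=
  ∃ l : Fin m,
    (γ = deltaW m + epsW l ∧ (tilde m lam).1 = (tilde m lam).2 l) ∨
      (γ = deltaW m - epsW l ∧ (tilde m lam).1 = -(tilde m lam).2 l)

/-- `λ` is regular: `|λ̃₁|, …, |λ̃_m|` are pairwise distinct. -/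
def Regular (m : ℕ) (lam : Wt m) : Prop :=
  ∀ i j : Fin m, |(tilde m lam).2 i| = |(tilde m lam).2 j| → i = j

/-- Elements of the Weyl group `W₀` of type `B_m`: signed permutations
(`true` = change sign). -/
abbrev W0T (m : ℕ) := Equiv.Perm (Fin m) × (Fin m → Bool)

/-- The action of `w ∈ W₀` on ρ-translated weights: it fixes the coordinate
`λ̃₀` and signed-permutes `λ̃₁, …, λ̃_m`. -/
def tact (m : ℕ) (w : W0T m) (v : Wt m) : Wt m :=
  (v.1, fun i => (if w.2 i then (-1 : ℚ) else 1) * v.2 (w.1⁻¹ i))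

/-- The signature of `w ∈ W₀`. -/
def sgn (m : ℕ) (w : W0T m) : ℤ :=
  (Equiv.Perm.sign w.1 : ℤ) * ∏ i, (if w.2 i then (-1 : ℤ) else 1)

/-- `ν` is `W₀`-dot-conjugate to `λ`, i.e. `ν = w·λ = w(λ+ρ) − ρ` for some
`w ∈ W₀`. -/
def DotConj (m : ℕ) (lam nu : Wt m) : Prop :=
  ∃ w : W0T m, tilde m nu = tact m w (tilde m lam)

/-- `ν = λ⁺`: `ν` is the (unique) `g₀`-dominant `W₀`-dot-conjugate of `λ`. -/
def IsPlus (m : ℕ) (lam nu : Wt m) : Prop :=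
  G0Dom m nu ∧ DotConj m lam nu

/-- `ν = λˇ = (λ − a₋γ)⁺`, where `γ` is the atypical root of `λ` and `a₋` is
the smallest positive integer with `λ − a₋γ` regular. -/
def IsCheck (m : ℕ) (lam nu : Wt m) : Prop :=
  ∃ γ : Wt m, AtypRoot m lam γ ∧
    ∃ a : ℕ, 0 < a ∧ Regular m (lam - (a : ℚ) • γ) ∧
      (∀ b : ℕ, 0 < b → b < a → ¬Regular m (lam - (b : ℚ) • γ)) ∧
      IsPlus m (lam - (a : ℚ) • γ) nu

/-- `ν = λ^ = (λ + a₊γ)⁺`, where `γ` is the atypical root of `λ` and `a₊` is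
the smallest positive integer with `λ + a₊γ` regular. -/
def IsHat (m : ℕ) (lam nu : Wt m) : Prop :=
  ∃ γ : Wt m, AtypRoot m lam γ ∧
    ∃ a : ℕ, 0 < a ∧ Regular m (lam + (a : ℚ) • γ) ∧
      (∀ b : ℕ, 0 < b → b < a → ¬Regular m (lam + (b : ℚ) • γ)) ∧
      IsPlus m (lam + (a : ℚ) • γ) nu

/-- The set of positive odd roots `Δ₁⁺ = {δ} ∪ {δ ± εᵢ}` (for `k = 2m+1`). -/
def Delta1 (m : ℕ) : Finset (Wt m) :=
  {deltaW m} ∪ (Finset.univ.image fun i : Fin m => deltaW m + epsW i) ∪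
    (Finset.univ.image fun i : Fin m => deltaW m - epsW i)

/- The multiplicity `b(λ, μ)`: the sum of `sign(w)` over all triples
`(p, T, w)` with `p ∈ ℤ≥0`, `T ⊆ Δ₁⁺`, `w ∈ W₀` such that
`ν = λ − Σ_{β∈T} β − 2pδ` is regular and `ν = w·μ`.  (Only finitely many `p`
contribute, so the outer `finsum` is the genuine finite sum.) -/
open Classical in
def bmult (m : ℕ) (lam mu : Wt m) : ℤ :=
  ∑ᶠ p : ℕ, ∑ T ∈ (Delta1 m).powerset, ∑ w : W0T m,
    if Regular m (lam - T.sum id - ((2 * p : ℕ) : ℚ) • deltaW m) ∧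
        tilde m (lam - T.sum id - ((2 * p : ℕ) : ℚ) • deltaW m) =
          tact m w (tilde m mu)
      then sgn m w else 0

namespace Osp
variable {m : ℕ}

lemma dpe_fst (i : Fin m) : (deltaW m + epsW i).1 = 1 := by simp [deltaW, epsW]
lemma dme_fst (i : Fin m) : (deltaW m - epsW i).1 = 1 := by simp [deltaW, epsW]
lemma dpe_snd (i : Fin m) : (deltaW m + epsW i).2 = Pi.single i 1 := by simp [deltaW, epsW]
lemma dme_snd (i : Fin m) : (deltaW m - epsW i).2 = -Pi.single i 1 := by simp [deltaW, epsW]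

lemma dpe_ne_delta (i : Fin m) : deltaW m + epsW i ≠ deltaW m := by
  intro h
  have := congrArg (fun x => x.2 i) h
  simp [deltaW, epsW] at this

lemma dme_ne_delta (i : Fin m) : deltaW m - epsW i ≠ deltaW m := by
  intro h
  have := congrArg (fun x => x.2 i) h
  simp [deltaW, epsW] at this

lemma dpe_ne_dme (i j : Fin m) : deltaW m + epsW i ≠ deltaW m - epsW j := by
  intro h
  have := congrArg (fun x => x.2 i) h
  by_cases hij : j = i <;> simp [deltaW, epsW, Pi.single_apply, hij] at this
  norm_num at this

lemma dpe_inj {i j : Fin m} (h : deltaW m + epsW i = deltaW m + epsW j) : i = j := by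
  have := congrArg (fun x => x.2 i) h
  by_cases hij : j = i
  · exact hij.symm
  · simp [deltaW, epsW, Pi.single_apply, hij] at this

lemma dme_inj {i j : Fin m} (h : deltaW m - epsW i = deltaW m - epsW j) : i = j := by
  have := congrArg (fun x => x.2 i) h
  by_cases hij : j = i
  · exact hij.symm
  · simp [deltaW, epsW, Pi.single_apply, hij] at this



lemma epsW_ne_zero (i : Fin m) : epsW i ≠ (0 : Wt m) := by
  intro h
  have := congrArg (fun x => x.2 i) h
  simp [epsW] at this

lemma deltaW_snd (i : Fin m) : (deltaW m).2 i = 0 := by simp [deltaW]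
lemma epsW_snd_self (i : Fin m) : (epsW i).2 i = 1 := by simp [epsW]
lemma epsW_snd_ne {i j : Fin m} (h : ¬ i = j) : (epsW j).2 i = 0 := by
  simp [epsW, Pi.single_apply, h]

lemma mem_delta1 {β : Wt m} : β ∈ Delta1 m ↔
    β = deltaW m ∨ (∃ i, β = deltaW m + epsW i) ∨ ∃ i, β = deltaW m - epsW i := by
  simp [Delta1, Finset.mem_union, Finset.mem_image, eq_comm, or_assoc]

lemma delta_mem_delta1 : deltaW m ∈ Delta1 m := mem_delta1.2 (Or.inl rfl)
lemma dpe_mem_delta1 (i : Fin m) : deltaW m + epsW i ∈ Delta1 m :=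
  mem_delta1.2 (Or.inr (Or.inl ⟨i, rfl⟩))
lemma dme_mem_delta1 (i : Fin m) : deltaW m - epsW i ∈ Delta1 m :=
  mem_delta1.2 (Or.inr (Or.inr ⟨i, rfl⟩))

lemma fst_sumT {T : Finset (Wt m)} (hT : T ⊆ Delta1 m) :
    (T.sum id).1 = T.card := by
  classical
  induction T using Finset.induction_on with
  | empty => simp
  | @insert β T' hβ ih =>
    have h1 : ((insert β T').sum id).1 = β.1 + (T'.sum id).1 := by
      rw [Finset.sum_insert hβ]; rfl
    have hβ1 : β.1 = 1 := by
      rcases mem_delta1.1 (hT (Finset.mem_insert_self β T')) with h | ⟨i, h⟩ | ⟨i, h⟩ <;>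
        subst h <;> simp [deltaW, epsW]
    rw [h1, Finset.card_insert_of_notMem hβ, hβ1,
      ih (fun x hx => hT (Finset.mem_insert_of_mem hx))]
    push_cast
    ring
lemma snd_sumT {T : Finset (Wt m)} (hT : T ⊆ Delta1 m) (i : Fin m) :
    (T.sum id).2 i = (if deltaW m + epsW i ∈ T then (1:ℚ) else 0)
      - (if deltaW m - epsW i ∈ T then (1:ℚ) else 0) := by
  classical
  induction T using Finset.induction_on with
  | empty => simp
  | @insert β T' hβ ih =>
    have h1 : ((insert β T').sum id).2 i = β.2 i + (T'.sum id).2 i := by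
      rw [Finset.sum_insert hβ]; rfl
    rw [h1, ih (fun x hx => hT (Finset.mem_insert_of_mem hx))]
    rcases mem_delta1.1 (hT (Finset.mem_insert_self β T')) with h | ⟨j, h⟩ | ⟨j, h⟩ <;> subst h
    · simp [Finset.mem_insert, dpe_ne_delta i, dme_ne_delta i, deltaW_snd, epsW_ne_zero]
    · by_cases hji : i = j
      · subst hji
        simp [Finset.mem_insert, hβ, (dpe_ne_dme i i).symm, deltaW_snd, epsW_snd_self]
        ring
      · have hne1 : deltaW m + epsW i ≠ deltaW m + epsW j := fun h => hji (dpe_inj h)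
        have hne2 : deltaW m - epsW i ≠ deltaW m + epsW j := (dpe_ne_dme j i).symm
        simp [Finset.mem_insert, hne1, hne2, deltaW_snd, epsW_snd_ne hji]
    · by_cases hji : i = j
      · subst hji
        simp [Finset.mem_insert, hβ, dpe_ne_dme i i, deltaW_snd, epsW_snd_self]
        ring
      · have hne1 : deltaW m - epsW i ≠ deltaW m - epsW j := fun h => hji (dme_inj h)
        have hne2 : deltaW m + epsW i ≠ deltaW m - epsW j := dpe_ne_dme i j
        simp [Finset.mem_insert, hne1, hne2, deltaW_snd, epsW_snd_ne hji]

lemma card_sumT {T : Finset (Wt m)} (hT : T ⊆ Delta1 m) :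
    (T.card : ℤ) = (if deltaW m ∈ T then 1 else 0)
      + ∑ i : Fin m, ((if deltaW m + epsW i ∈ T then 1 else 0)
          + (if deltaW m - epsW i ∈ T then (1:ℤ) else 0)) := by
  classical
  induction T using Finset.induction_on with
  | empty => simp
  | @insert β T' hβ ih =>
    rw [Finset.card_insert_of_notMem hβ]
    have ih' := ih (fun x hx => hT (Finset.mem_insert_of_mem hx))
    rcases mem_delta1.1 (hT (Finset.mem_insert_self β T')) with h | ⟨j, h⟩ | ⟨j, h⟩ <;> subst h
    · have e : ∀ i : Fin m,
          ((if deltaW m + epsW i ∈ insert (deltaW m) T' then (1:ℤ) else 0)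
            + (if deltaW m - epsW i ∈ insert (deltaW m) T' then (1:ℤ) else 0))
          = ((if deltaW m + epsW i ∈ T' then 1 else 0)
            + (if deltaW m - epsW i ∈ T' then (1:ℤ) else 0)) := by
        intro i
        simp [Finset.mem_insert, dpe_ne_delta i, dme_ne_delta i]
      rw [Finset.sum_congr rfl (fun i _ => e i)]
      simp [Finset.mem_insert, hβ, ih']
      push_cast
      ring
    · have e : ∀ i : Fin m,
          ((if deltaW m + epsW i ∈ insert (deltaW m + epsW j) T' then (1:ℤ) else 0)
            + (if deltaW m - epsW i ∈ insert (deltaW m + epsW j) T' then (1:ℤ) else 0))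
          = ((if deltaW m + epsW i ∈ T' then 1 else 0)
            + (if deltaW m - epsW i ∈ T' then (1:ℤ) else 0)) + (if i = j then 1 else 0) := by
        intro i
        by_cases hij : i = j
        · subst hij
          simp [Finset.mem_insert, hβ, (dpe_ne_dme i i).symm]
          ring
        · have hne1 : deltaW m + epsW i ≠ deltaW m + epsW j := fun h => hij (dpe_inj h)
          have hne2 : deltaW m - epsW i ≠ deltaW m + epsW j := (dpe_ne_dme j i).symm
          simp [Finset.mem_insert, hne1, hne2, hij]
      rw [Finset.sum_congr rfl (fun i _ => e i), Finset.sum_add_distrib,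
        Finset.sum_ite_eq' Finset.univ j (fun _ => (1:ℤ))]
      have hd : deltaW m ∈ insert (deltaW m + epsW j) T' ↔ deltaW m ∈ T' := by
        simp [Finset.mem_insert, epsW_ne_zero, (dpe_ne_delta j).symm]
      rw [if_congr hd rfl rfl]
      simp [ih']
      push_cast
      ring
    · have e : ∀ i : Fin m,
          ((if deltaW m + epsW i ∈ insert (deltaW m - epsW j) T' then (1:ℤ) else 0)
            + (if deltaW m - epsW i ∈ insert (deltaW m - epsW j) T' then (1:ℤ) else 0))
          = ((if deltaW m + epsW i ∈ T' then 1 else 0)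
            + (if deltaW m - epsW i ∈ T' then (1:ℤ) else 0)) + (if i = j then 1 else 0) := by
        intro i
        by_cases hij : i = j
        · subst hij
          simp [Finset.mem_insert, hβ, dpe_ne_dme i i]
        · have hne1 : deltaW m - epsW i ≠ deltaW m - epsW j := fun h => hij (dme_inj h)
          have hne2 : deltaW m + epsW i ≠ deltaW m - epsW j := dpe_ne_dme i j
          simp [Finset.mem_insert, hne1, hne2, hij]
      rw [Finset.sum_congr rfl (fun i _ => e i), Finset.sum_add_distrib,
        Finset.sum_ite_eq' Finset.univ j (fun _ => (1:ℤ))]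
      have hd : deltaW m ∈ insert (deltaW m - epsW j) T' ↔ deltaW m ∈ T' := by
        simp [Finset.mem_insert, epsW_ne_zero, (dme_ne_delta j).symm]
      rw [if_congr hd rfl rfl]
      simp [ih']
      push_cast
      ring
lemma tilde_sub (x v : Wt m) : tilde m (x - v) = tilde m x - v := by
  refine Prod.ext ?_ (funext fun i => ?_)
  · show (x.1 - v.1) + 1/2 - (m:ℚ) = (x.1 + 1/2 - m) - v.1
    ring
  · show (x.2 i - v.2 i) + m - 1/2 - i = (x.2 i + m - 1/2 - i) - v.2 i
    ring

lemma tilde_add (x v : Wt m) : tilde m (x + v) = tilde m x + v := by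
  refine Prod.ext ?_ (funext fun i => ?_)
  · show (x.1 + v.1) + 1/2 - (m:ℚ) = (x.1 + 1/2 - m) + v.1
    ring
  · show (x.2 i + v.2 i) + m - 1/2 - i = (x.2 i + m - 1/2 - i) + v.2 i
    ring

lemma smul_deltaW (t : ℚ) : t • deltaW m = ((t : ℚ), (0 : Fin m → ℚ)) := by
  refine Prod.ext ?_ ?_ <;> simp [deltaW]

lemma tact_fst (w : W0T m) (v : Wt m) : (tact m w v).1 = v.1 := rfl
lemma tact_snd (w : W0T m) (v : Wt m) (i : Fin m) :
    (tact m w v).2 i = (if w.2 i then (-1:ℚ) else 1) * v.2 (w.1⁻¹ i) := rfl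

lemma tact_update (w : W0T m) (v : Wt m) (i0 : Fin m) :
    tact m (w.1, Function.update w.2 i0 (!w.2 i0)) v
      = ((tact m w v).1,
          Function.update (tact m w v).2 i0 (-(tact m w v).2 i0)) := by
  refine Prod.ext rfl (funext fun i => ?_)
  have lhs : (tact m (w.1, Function.update w.2 i0 (!w.2 i0)) v).2 i
      = (if Function.update w.2 i0 (!w.2 i0) i then (-1:ℚ) else 1) * v.2 (w.1⁻¹ i) := rfl
  have rhs : ((tact m w v).1,
      Function.update (tact m w v).2 i0 (-(tact m w v).2 i0)).2 i
      = Function.update (tact m w v).2 i0 (-(tact m w v).2 i0) i := rfl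
  rw [lhs, rhs]
  by_cases h : i = i0
  · subst h
    rw [Function.update_self, Function.update_self, tact_snd]
    cases hb : w.2 i <;> simp [hb]
  · rw [Function.update_of_ne h, Function.update_of_ne h, tact_snd]

lemma tact_swapc (w : W0T m) (v : Wt m) (i1 i2 : Fin m) :
    tact m (Equiv.swap i1 i2 * w.1, w.2 ∘ (Equiv.swap i1 i2)) v
      = ((tact m w v).1, fun i => (tact m w v).2 (Equiv.swap i1 i2 i)) := by
  refine Prod.ext rfl (funext fun i => ?_)
  show (if w.2 (Equiv.swap i1 i2 i) then (-1:ℚ) else 1)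
      * v.2 ((Equiv.swap i1 i2 * w.1)⁻¹ i) = _
  have : (Equiv.swap i1 i2 * w.1)⁻¹ i = w.1⁻¹ (Equiv.swap i1 i2 i) := by
    rw [mul_inv_rev]
    simp [Equiv.swap_inv]
  rw [this]
  rfl

lemma sgn_update (w : W0T m) (i0 : Fin m) :
    sgn m (w.1, Function.update w.2 i0 (!w.2 i0)) = - sgn m w := by
  unfold sgn
  have h1 : (fun i => if Function.update w.2 i0 (!w.2 i0) i then (-1:ℤ) else 1)
      = Function.update (fun i => if w.2 i then (-1:ℤ) else 1) i0
          (if !w.2 i0 then (-1:ℤ) else 1) := by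
    funext i
    by_cases h : i = i0
    · subst h; rw [Function.update_self, Function.update_self]
    · rw [Function.update_of_ne h, Function.update_of_ne h]
  show (Equiv.Perm.sign w.1 : ℤ) * (∏ i, if Function.update w.2 i0 (!w.2 i0) i then (-1:ℤ) else 1)
      = -((Equiv.Perm.sign w.1 : ℤ) * ∏ i, if w.2 i then (-1:ℤ) else 1)
  rw [show (∏ i, if Function.update w.2 i0 (!w.2 i0) i then (-1:ℤ) else 1)
      = ∏ i, Function.update (fun i => if w.2 i then (-1:ℤ) else 1) i0
          (if !w.2 i0 then (-1:ℤ) else 1) i from by rw [← h1]]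
  rw [Finset.prod_update_of_mem (Finset.mem_univ i0)]
  rw [← Finset.mul_prod_erase Finset.univ _ (Finset.mem_univ i0)]
  have : (if !w.2 i0 then (-1:ℤ) else 1) = -(if w.2 i0 then (-1:ℤ) else 1) := by
    cases w.2 i0 <;> norm_num
  rw [this, show Finset.univ \ {i0} = Finset.univ.erase i0 from Finset.sdiff_singleton_eq_erase i0 Finset.univ]
  ring

lemma sgn_swapc (w : W0T m) {i1 i2 : Fin m} (h : i1 ≠ i2) :
    sgn m (Equiv.swap i1 i2 * w.1, w.2 ∘ (Equiv.swap i1 i2)) = - sgn m w := by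
  unfold sgn
  show ((Equiv.Perm.sign (Equiv.swap i1 i2 * w.1)) : ℤ)
      * (∏ i, if w.2 (Equiv.swap i1 i2 i) then (-1:ℤ) else 1) = _
  rw [Equiv.Perm.sign_mul, Equiv.Perm.sign_swap h]
  rw [Equiv.prod_comp (Equiv.swap i1 i2) (fun i => if w.2 i then (-1:ℤ) else 1)]
  push_cast
  ring
structure Setup (m : ℕ) where
  q : ℕ
  lam0 : Wt m
  lam1 : Wt m
  hq : q + 1 ≤ m
  hfst0 : (tilde m lam0).1 = -((q : ℚ) + 1/2)
  hfst1 : (tilde m lam1).1 = (q : ℚ) + 1/2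
  htail : (tilde m lam1).2 = (tilde m lam0).2
  hanti : ∀ i j : Fin m, i < j → (tilde m lam0).2 j < (tilde m lam0).2 i
  hhalf : ∀ i : Fin m, ∃ n : ℕ, (tilde m lam0).2 i = (n : ℚ) + 1/2
  hidx : ∀ j : ℕ, j ≤ q → ∀ (h : m - 1 - j < m),
    (tilde m lam0).2 ⟨m - 1 - j, h⟩ = (j : ℚ) + 1/2

namespace Setup

variable {m : ℕ}

def c (C : Setup m) : Fin m → ℚ := (tilde m C.lam0).2

lemma hm (C : Setup m) : 0 < m := by have := C.hq; omega

def idx (C : Setup m) (j : ℕ) : Fin m := ⟨m - 1 - j, by have := C.hm; omega⟩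

lemma cidx (C : Setup m) {j : ℕ} (hj : j ≤ C.q) : C.c (C.idx j) = (j : ℚ) + 1/2 :=
  C.hidx j hj _

lemma cinj (C : Setup m) : Function.Injective C.c := by
  intro i j h
  rcases lt_trichotomy i j with hc | hc | hc
  · exact absurd h (ne_of_gt (C.hanti i j hc))
  · exact hc
  · exact absurd h (ne_of_lt (C.hanti j i hc))

lemma chalf (C : Setup m) (i : Fin m) : ∃ n : ℕ, C.c i = (n : ℚ) + 1/2 := C.hhalf i

lemma cpos (C : Setup m) (i : Fin m) : (1:ℚ)/2 ≤ C.c i := by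
  obtain ⟨n, hn⟩ := C.chalf i
  rw [hn]
  have : (0:ℚ) ≤ n := Nat.cast_nonneg n
  linarith

lemma idx_inj (C : Setup m) {j k : ℕ} (hj : j ≤ C.q) (hk : k ≤ C.q) (h : C.idx j = C.idx k) :
    j = k := by
  have := C.hq
  have h' : m - 1 - j = m - 1 - k := congrArg Fin.val h
  omega

lemma idx_ne (C : Setup m) {j k : ℕ} (hj : j ≤ C.q) (hk : k ≤ C.q) (h : j ≠ k) :
    C.idx j ≠ C.idx k := fun hc => h (C.idx_inj hj hk hc)

/-- `ν = λ⁽¹⁾ - Σ T - 2pδ`. -/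
def nu (C : Setup m) (p : ℕ) (T : Finset (Wt m)) : Wt m :=
  C.lam1 - T.sum id - ((2 * p : ℕ) : ℚ) • deltaW m

lemma nu_fst (C : Setup m) (p : ℕ) {T : Finset (Wt m)} (hT : T ⊆ Delta1 m) :
    (tilde m (C.nu p T)).1 = ((C.q : ℚ) + 1/2) - T.card - 2 * p := by
  unfold nu
  rw [tilde_sub, tilde_sub]
  have h1 : (tilde m C.lam1 - T.sum id - ((2 * p : ℕ) : ℚ) • deltaW m).1
      = (tilde m C.lam1).1 - (T.sum id).1 - (((2 * p : ℕ) : ℚ) • deltaW m).1 := rfl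
  rw [h1, C.hfst1, fst_sumT hT, smul_deltaW]
  push_cast
  ring

lemma nu_snd (C : Setup m) (p : ℕ) {T : Finset (Wt m)} (hT : T ⊆ Delta1 m) (i : Fin m) :
    (tilde m (C.nu p T)).2 i = C.c i
      - ((if deltaW m + epsW i ∈ T then (1:ℚ) else 0)
          - (if deltaW m - epsW i ∈ T then (1:ℚ) else 0)) := by
  unfold nu
  rw [tilde_sub, tilde_sub]
  have h1 : (tilde m C.lam1 - T.sum id - ((2 * p : ℕ) : ℚ) • deltaW m).2 i
      = (tilde m C.lam1).2 i - (T.sum id).2 i - (((2 * p : ℕ) : ℚ) • deltaW m).2 i := rfl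
  rw [h1, C.htail, snd_sumT hT i, smul_deltaW]
  show C.c i - _ - 0 = _
  ring

/-- The validity condition appearing in `bmult`. -/
def Cond (C : Setup m) (p : ℕ) (T : Finset (Wt m)) (w : W0T m) : Prop :=
  Regular m (C.nu p T) ∧ tilde m (C.nu p T) = tact m w (tilde m C.lam0)

lemma card_eqn (C : Setup m) {p : ℕ} {T : Finset (Wt m)} {w : W0T m}
    (hT : T ⊆ Delta1 m) (h : C.Cond p T w) :
    (T.card : ℤ) + 2 * p = 2 * C.q + 1 := by
  have h1 := congrArg Prod.fst h.2
  rw [nu_fst C p hT, tact_fst, C.hfst0] at h1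
  have : (T.card : ℚ) + 2 * p = 2 * C.q + 1 := by linarith
  exact_mod_cast this

end Setup
/- Generic finset "exchange one element" helpers. -/
section Exchange
variable {α : Type*} [DecidableEq α]

lemma exch_mem {T : Finset α} {b1 b2 x : α} :
    x ∈ insert b1 (T.erase b2) ↔ x = b1 ∨ (x ∈ T ∧ x ≠ b2) := by
  simp [Finset.mem_insert, Finset.mem_erase, and_comm]

lemma exch_card {T : Finset α} {b1 b2 : α} (h2 : b2 ∈ T) (h1 : b1 ∉ T) :
    (insert b1 (T.erase b2)).card = T.card := by
  rw [Finset.card_insert_of_notMem (fun hc => h1 (Finset.mem_of_mem_erase hc)),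
    Finset.card_erase_of_mem h2]
  have : 0 < T.card := Finset.card_pos.2 ⟨b2, h2⟩
  omega

lemma exch_exch {T : Finset α} {b1 b2 : α} (h2 : b2 ∈ T) (h1 : b1 ∉ T) :
    insert b2 ((insert b1 (T.erase b2)).erase b1) = T := by
  have e1 : (insert b1 (T.erase b2)).erase b1 = T.erase b2 := by
    rw [Finset.erase_insert]
    intro hc
    exact h1 (Finset.mem_of_mem_erase hc)
  rw [e1, Finset.insert_erase h2]

lemma exch_sum {M : Type*} [AddCommGroup M] {T : Finset α} {b1 b2 : α}
    (h2 : b2 ∈ T) (h1 : b1 ∉ T) (f : α → M) :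
    (insert b1 (T.erase b2)).sum f = T.sum f + f b1 - f b2 := by
  rw [Finset.sum_insert (fun hc => h1 (Finset.mem_of_mem_erase hc)),
    Finset.sum_erase_eq_sub h2]
  abel

end Exchange

namespace Setup
variable {m : ℕ}

def bothp (C : Setup m) (T : Finset (Wt m)) (j : ℕ) : Prop :=
  deltaW m + epsW (C.idx j) ∈ T ∧ deltaW m - epsW (C.idx j) ∈ T

instance (C : Setup m) (T : Finset (Wt m)) (j : ℕ) : Decidable (C.bothp T j) := by
  unfold bothp; infer_instance

def J (C : Setup m) (T : Finset (Wt m)) : ℕ :=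
  Nat.find (p := fun j => C.q < j ∨ ¬ C.bothp T j) ⟨C.q + 1, Or.inl (Nat.lt_succ_self _)⟩

def move (C : Setup m) (T : Finset (Wt m)) (w : W0T m) : Finset (Wt m) × W0T m :=
  if deltaW m + epsW (C.idx (C.J T)) ∈ T then
    if deltaW m - epsW (C.idx (C.J T)) ∈ T then (T, w)
    else (insert (deltaW m) (T.erase (deltaW m + epsW (C.idx (C.J T)))),
          (w.1, Function.update w.2 (C.idx (C.J T)) (!w.2 (C.idx (C.J T)))))
  else
    if deltaW m - epsW (C.idx (C.J T)) ∈ T then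
      (insert (deltaW m + epsW (C.idx (C.J T)))
          (T.erase (deltaW m + epsW (C.idx (C.J T + 1)))),
       (Equiv.swap (C.idx (C.J T)) (C.idx (C.J T + 1)) * w.1,
        w.2 ∘ (Equiv.swap (C.idx (C.J T)) (C.idx (C.J T + 1)))))
    else
      if C.J T = 0 then
        (insert (deltaW m + epsW (C.idx (C.J T))) (T.erase (deltaW m)),
         (w.1, Function.update w.2 (C.idx (C.J T)) (!w.2 (C.idx (C.J T)))))
      else
        (insert (deltaW m + epsW (C.idx (C.J T)))
            (T.erase (deltaW m + epsW (C.idx (C.J T - 1)))),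
         (Equiv.swap (C.idx (C.J T - 1)) (C.idx (C.J T)) * w.1,
          w.2 ∘ (Equiv.swap (C.idx (C.J T - 1)) (C.idx (C.J T)))))

lemma J_le (C : Setup m) {T : Finset (Wt m)} {j : ℕ}
    (h : j ≤ C.q) (hb : ¬ C.bothp T j) : C.J T ≤ j :=
  Nat.find_le (Or.inr hb)

lemma J_spec (C : Setup m) (T : Finset (Wt m)) :
    C.q < C.J T ∨ ¬ C.bothp T (C.J T) :=
  Nat.find_spec (p := fun j => C.q < j ∨ ¬ C.bothp T j) ⟨C.q + 1, Or.inl (Nat.lt_succ_self _)⟩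

lemma J_pref (C : Setup m) (T : Finset (Wt m)) {j : ℕ} (h : j < C.J T) :
    C.bothp T j := by
  have := Nat.find_min (p := fun j => C.q < j ∨ ¬ C.bothp T j)
    ⟨C.q + 1, Or.inl (Nat.lt_succ_self _)⟩ h
  simp only [not_or, not_not] at this
  exact this.2

lemma J_eq (C : Setup m) (T : Finset (Wt m)) {j : ℕ} (hle : j ≤ C.q)
    (hnb : ¬ C.bothp T j) (hpre : ∀ k, k < j → C.bothp T k) : C.J T = j := by
  have h1 : C.J T ≤ j := C.J_le hle hnb
  rcases Nat.lt_or_ge (C.J T) j with h | h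
  · rcases C.J_spec T with h2 | h2
    · omega
    · exact absurd (hpre _ h) h2
  · omega

/-- Transfer `Cond` along a sign flip at one coordinate. -/
lemma cond_negate (C : Setup m) {p : ℕ} {T T' : Finset (Wt m)} {w : W0T m}
    (hcond : C.Cond p T w) (i0 : Fin m)
    (heq : tilde m (C.nu p T') = ((tilde m (C.nu p T)).1,
      Function.update (tilde m (C.nu p T)).2 i0 (-(tilde m (C.nu p T)).2 i0))) :
    C.Cond p T' (w.1, Function.update w.2 i0 (!w.2 i0)) := by
  constructor
  · intro i j hij
    have habs : ∀ k, |(tilde m (C.nu p T')).2 k| = |(tilde m (C.nu p T)).2 k| := by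
      intro k
      rw [heq]
      by_cases hk : k = i0
      · subst hk
        show |Function.update (tilde m (C.nu p T)).2 k (-(tilde m (C.nu p T)).2 k) k| = _
        rw [Function.update_self, abs_neg]
      · show |Function.update (tilde m (C.nu p T)).2 i0 (-(tilde m (C.nu p T)).2 i0) k| = _
        rw [Function.update_of_ne hk]
    rw [habs i, habs j] at hij
    exact hcond.1 i j hij
  · rw [heq, tact_update, hcond.2]

/-- Transfer `Cond` along a swap of two coordinates. -/
lemma cond_swap (C : Setup m) {p : ℕ} {T T' : Finset (Wt m)} {w : W0T m}
    (hcond : C.Cond p T w) (i1 i2 : Fin m)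
    (heq : tilde m (C.nu p T') = ((tilde m (C.nu p T)).1,
      fun i => (tilde m (C.nu p T)).2 (Equiv.swap i1 i2 i))) :
    C.Cond p T' (Equiv.swap i1 i2 * w.1, w.2 ∘ (Equiv.swap i1 i2)) := by
  constructor
  · intro i j hij
    have habs : ∀ k, (tilde m (C.nu p T')).2 k
        = (tilde m (C.nu p T)).2 (Equiv.swap i1 i2 k) := by
      intro k; rw [heq]
    rw [habs i, habs j] at hij
    have := hcond.1 _ _ hij
    exact (Equiv.swap i1 i2).injective this
  · rw [heq, tact_swapc, hcond.2]

lemma update_bool_invol (f : Fin m → Bool) (i : Fin m) :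
    Function.update (Function.update f i (!f i)) i
      (!(Function.update f i (!f i) i)) = f := by
  funext k
  by_cases hk : k = i
  · subst hk
    simp
  · simp [Function.update_of_ne hk]

end Setup
namespace Setup
variable {m : ℕ}

lemma habs (C : Setup m) {p : ℕ} {T : Finset (Wt m)} {w : W0T m}
    (hcond : C.Cond p T w) (i : Fin m) :
    |(tilde m (C.nu p T)).2 i| = C.c (w.1⁻¹ i) := by
  have hpos : (0:ℚ) < C.c (w.1⁻¹ i) := lt_of_lt_of_le (by norm_num) (C.cpos _)
  have h' : (tilde m (C.nu p T)).2 i = (if w.2 i then (-1:ℚ) else 1) * C.c (w.1⁻¹ i) := by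
    rw [hcond.2]; rfl
  rw [h']
  cases hw : w.2 i <;> simp [hw, abs_of_pos hpos] <;> exact hpos.le

lemma hsurj (C : Setup m) {p : ℕ} {T : Finset (Wt m)} {w : W0T m}
    (hcond : C.Cond p T w) (j : Fin m) :
    |(tilde m (C.nu p T)).2 (w.1 j)| = C.c j := by
  rw [C.habs hcond (w.1 j), ← Equiv.Perm.mul_apply, inv_mul_cancel, Equiv.Perm.one_apply]

lemma neg_struct (C : Setup m) {p : ℕ} {T : Finset (Wt m)}
    (hT : T ⊆ Delta1 m) {i : Fin m}
    (hneg : (tilde m (C.nu p T)).2 i < 0) :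
    i = C.idx 0 ∧ (tilde m (C.nu p T)).2 i = -(1/2)
      ∧ deltaW m + epsW i ∈ T ∧ deltaW m - epsW i ∉ T := by
  obtain ⟨n, hn⟩ := C.chalf i
  rw [C.nu_snd p hT i, hn] at hneg
  by_cases h1 : deltaW m + epsW i ∈ T <;> by_cases h2 : deltaW m - epsW i ∈ T <;>
    simp only [h1, h2, if_true, if_false] at hneg
  · have : (0:ℚ) ≤ n := Nat.cast_nonneg n
    norm_num at hneg
    linarith
  · -- u = 1 : value n - 1/2 < 0, so n = 0
    have hn0 : n = 0 := by
      by_contra hc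
      have : (1:ℚ) ≤ n := by exact_mod_cast Nat.one_le_iff_ne_zero.2 hc
      linarith
    subst hn0
    have hci : C.c i = 1/2 := by rw [hn]; norm_num
    have hi0 : i = C.idx 0 := by
      apply C.cinj
      rw [hci, C.cidx (Nat.zero_le _)]
      norm_num
    refine ⟨hi0, ?_, h1, h2⟩
    rw [C.nu_snd p hT i, hci, if_pos h1, if_neg h2]
    norm_num
  · have : (0:ℚ) ≤ n := Nat.cast_nonneg n
    linarith
  · have : (0:ℚ) ≤ n := Nat.cast_nonneg n
    linarith

lemma cost_le (C : Setup m) {p : ℕ} {T : Finset (Wt m)} {w : W0T m}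
    (hT : T ⊆ Delta1 m) (hcond : C.Cond p T w) (s : Finset (Fin m)) :
    (∑ i ∈ s, ((if deltaW m + epsW i ∈ T then (1:ℤ) else 0)
      + (if deltaW m - epsW i ∈ T then (1:ℤ) else 0))) + 2 * p ≤ 2 * C.q + 1 := by
  have h1 := card_sumT hT
  have h2 := C.card_eqn hT hcond
  have h3 : (∑ i ∈ s, ((if deltaW m + epsW i ∈ T then (1:ℤ) else 0)
      + (if deltaW m - epsW i ∈ T then (1:ℤ) else 0)))
      ≤ ∑ i : Fin m, ((if deltaW m + epsW i ∈ T then (1:ℤ) else 0)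
      + (if deltaW m - epsW i ∈ T then (1:ℤ) else 0)) := by
    apply Finset.sum_le_sum_of_subset_of_nonneg (Finset.subset_univ s)
    intro i _ _
    positivity
  have h4 : (0:ℤ) ≤ (if deltaW m ∈ T then 1 else 0) := by positivity
  omega

lemma J_le_q (C : Setup m) {p : ℕ} {T : Finset (Wt m)} {w : W0T m}
    (hT : T ⊆ Delta1 m) (hcond : C.Cond p T w) : C.J T ≤ C.q := by
  by_contra hc
  push_neg at hc
  have hall : ∀ j, j ≤ C.q → C.bothp T j := fun j hj => C.J_pref T (lt_of_le_of_lt hj hc)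
  have hinj : ∀ x ∈ Finset.range (C.q+1), ∀ y ∈ Finset.range (C.q+1),
      C.idx x = C.idx y → x = y := by
    intro x hx y hy h
    exact C.idx_inj (by simpa using Nat.lt_succ_iff.1 (Finset.mem_range.1 hx))
      (by simpa using Nat.lt_succ_iff.1 (Finset.mem_range.1 hy)) h
  have hsum := C.cost_le hT hcond ((Finset.range (C.q+1)).image C.idx)
  rw [Finset.sum_image hinj] at hsum
  have heval : ∀ j ∈ Finset.range (C.q+1),
      ((if deltaW m + epsW (C.idx j) ∈ T then (1:ℤ) else 0)
        + (if deltaW m - epsW (C.idx j) ∈ T then (1:ℤ) else 0)) = 2 := by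
    intro j hj
    have hb := hall j (Nat.lt_succ_iff.1 (Finset.mem_range.1 hj))
    rw [if_pos hb.1, if_pos hb.2]
    norm_num
  rw [Finset.sum_congr rfl heval, Finset.sum_const, Finset.card_range] at hsum
  rw [nsmul_eq_mul] at hsum
  push_cast at hsum
  omega

end Setup
namespace Setup
variable {m : ℕ}

lemma delta_parity (C : Setup m) {p : ℕ} {T : Finset (Wt m)} {w : W0T m}
    (hT : T ⊆ Delta1 m) (hcond : C.Cond p T w) :
    (deltaW m ∈ T) ↔ ¬ ((tilde m (C.nu p T)).2 (C.idx 0) < 0) := by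
  classical
  set F : Fin m → ℚ := fun i => (tilde m (C.nu p T)).2 i with hF
  have s1 : ∑ i, |F i| = ∑ i, C.c i := by
    rw [Finset.sum_congr rfl (fun i _ => C.habs hcond i)]
    exact Equiv.sum_comp w.1⁻¹ C.c
  have pt : ∀ i, |F i| - F i = if i = C.idx 0 ∧ F (C.idx 0) < 0 then (1:ℚ) else 0 := by
    intro i
    rcases le_or_gt 0 (F i) with h | h
    · rw [abs_of_nonneg h, if_neg]
      · ring
      · rintro ⟨rfl, hlt⟩
        exact absurd h (not_le.2 hlt)
    · obtain ⟨hi0, hval, _, _⟩ := C.neg_struct hT h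
      have hlt0 : F (C.idx 0) < 0 := by rw [← hi0]; exact h
      have hFi : F i = -(1/2) := hval
      rw [hFi, if_pos ⟨hi0, hlt0⟩, abs_neg, abs_of_nonneg (by norm_num : (0:ℚ) ≤ 1/2)]
      norm_num
  have s2 : ∑ i, (|F i| - F i) = (if F (C.idx 0) < 0 then (1:ℚ) else 0) := by
    rw [Finset.sum_congr rfl (fun i _ => pt i)]
    by_cases hc : F (C.idx 0) < 0
    · simp only [hc, and_true]
      rw [Finset.sum_ite_eq' Finset.univ (C.idx 0) (fun _ => (1:ℚ))]
      simp [hc]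
    · simp [hc]
  have s3 : ∑ i, F i = ∑ i, C.c i
      - ∑ i, ((if deltaW m + epsW i ∈ T then (1:ℚ) else 0)
          - (if deltaW m - epsW i ∈ T then (1:ℚ) else 0)) := by
    rw [← Finset.sum_sub_distrib]
    apply Finset.sum_congr rfl
    intro i _
    show (tilde m (C.nu p T)).2 i = _
    rw [C.nu_snd p hT i]
  have s2' : ∑ i, (|F i| - F i) = ∑ i, |F i| - ∑ i, F i := Finset.sum_sub_distrib _ _
  have s4 : ∑ i, ((if deltaW m + epsW i ∈ T then (1:ℚ) else 0)
      - (if deltaW m - epsW i ∈ T then (1:ℚ) else 0))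
      = (if F (C.idx 0) < 0 then (1:ℚ) else 0) := by linarith
  -- integer version
  have cast1 : ((∑ i, ((if deltaW m + epsW i ∈ T then (1:ℤ) else 0)
      - (if deltaW m - epsW i ∈ T then (1:ℤ) else 0)) : ℤ) : ℚ)
      = ∑ i, ((if deltaW m + epsW i ∈ T then (1:ℚ) else 0)
          - (if deltaW m - epsW i ∈ T then (1:ℚ) else 0)) := by
    push_cast
    rfl
  have s5 : (∑ i, ((if deltaW m + epsW i ∈ T then (1:ℤ) else 0)
      - (if deltaW m - epsW i ∈ T then (1:ℤ) else 0)))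
      = (if F (C.idx 0) < 0 then (1:ℤ) else 0) := by
    have : ((∑ i, ((if deltaW m + epsW i ∈ T then (1:ℤ) else 0)
        - (if deltaW m - epsW i ∈ T then (1:ℤ) else 0)) : ℤ) : ℚ)
        = (((if F (C.idx 0) < 0 then (1:ℤ) else 0) : ℤ) : ℚ) := by
      rw [cast1, s4]
      by_cases hc : F (C.idx 0) < 0 <;> simp [hc]
    exact_mod_cast this
  have hcard := card_sumT hT
  have hceq := C.card_eqn hT hcond
  have split : ∑ i : Fin m, ((if deltaW m + epsW i ∈ T then (1:ℤ) else 0)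
      + (if deltaW m - epsW i ∈ T then (1:ℤ) else 0))
      = (∑ i, ((if deltaW m + epsW i ∈ T then (1:ℤ) else 0)
          - (if deltaW m - epsW i ∈ T then (1:ℤ) else 0)))
        + 2 * ∑ i, (if deltaW m - epsW i ∈ T then (1:ℤ) else 0) := by
    rw [Finset.mul_sum, ← Finset.sum_add_distrib]
    apply Finset.sum_congr rfl
    intro i _
    ring
  rw [split, s5] at hcard
  constructor
  · intro hδ hlt
    rw [if_pos hδ, if_pos hlt] at hcard
    omega
  · intro hnlt
    by_contra hδ
    rw [if_neg hδ, if_neg hnlt] at hcard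
    omega

end Setup
namespace Setup
variable {m : ℕ}

theorem move_spec (C : Setup m) {p : ℕ} {T : Finset (Wt m)} {w : W0T m}
    (hT : T ⊆ Delta1 m) (hcond : C.Cond p T w) :
    (C.move T w).1 ⊆ Delta1 m ∧
    C.Cond p (C.move T w).1 (C.move T w).2 ∧
    sgn m (C.move T w).2 = - sgn m w ∧
    C.move (C.move T w).1 (C.move T w).2 = (T, w) ∧
    (C.move T w).1 ≠ T := by
  classical
  have hJq : C.J T ≤ C.q := C.J_le_q hT hcond
  have hnb : ¬ C.bothp T (C.J T) := (C.J_spec T).resolve_left (by omega)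
  have hpref : ∀ k, k < C.J T → C.bothp T k := fun k hk => C.J_pref T hk
  by_cases hA : deltaW m + epsW (C.idx (C.J T)) ∈ T
  · by_cases hB : deltaW m - epsW (C.idx (C.J T)) ∈ T
    · exact absurd ⟨hA, hB⟩ hnb
    · -- P10 : flip back at idx 0
      have hJ0 : C.J T = 0 := by
        by_contra hJ0
        have hJ1 : 1 ≤ C.J T := Nat.one_le_iff_ne_zero.2 hJ0
        have hx1 : (tilde m (C.nu p T)).2 (C.idx (C.J T)) = (C.J T : ℚ) - 1/2 := by
          rw [C.nu_snd p hT, if_pos hA, if_neg hB, C.cidx hJq]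
          push_cast
          ring
        have hpre := hpref (C.J T - 1) (by omega)
        have hx2 : (tilde m (C.nu p T)).2 (C.idx (C.J T - 1)) = (C.J T : ℚ) - 1/2 := by
          rw [C.nu_snd p hT, if_pos hpre.1, if_pos hpre.2, C.cidx (by omega)]
          rw [Nat.cast_sub hJ1]
          push_cast
          ring
        have heqabs : |(tilde m (C.nu p T)).2 (C.idx (C.J T))|
            = |(tilde m (C.nu p T)).2 (C.idx (C.J T - 1))| := by rw [hx1, hx2]
        have := C.idx_inj hJq (by omega) (hcond.1 _ _ heqabs)
        omega
      rw [hJ0] at hA hB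
      have hx0 : (tilde m (C.nu p T)).2 (C.idx 0) = -(1/2) := by
        rw [C.nu_snd p hT, if_pos hA, if_neg hB, C.cidx (Nat.zero_le _)]
        norm_num
      have hdel : deltaW m ∉ T := fun hd =>
        ((C.delta_parity hT hcond).1 hd) (by rw [hx0]; norm_num)
      have hmv : C.move T w = (insert (deltaW m) (T.erase (deltaW m + epsW (C.idx 0))),
          (w.1, Function.update w.2 (C.idx 0) (!w.2 (C.idx 0)))) := by
        unfold move
        rw [hJ0, if_pos hA, if_neg hB]
      rw [hmv]
      set T' := insert (deltaW m) (T.erase (deltaW m + epsW (C.idx 0))) with hT'def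
      have hmemdel : deltaW m ∈ T' := Finset.mem_insert_self _ _
      have hmem_pe : ∀ i : Fin m, (deltaW m + epsW i ∈ T')
          ↔ (¬ i = C.idx 0 ∧ deltaW m + epsW i ∈ T) := by
        intro i
        rw [hT'def, exch_mem]
        constructor
        · rintro (h | ⟨hmem, hne⟩)
          · exact absurd h (dpe_ne_delta i)
          · exact ⟨fun hi => hne (by rw [hi]), hmem⟩
        · rintro ⟨hne, hmem⟩
          exact Or.inr ⟨hmem, fun hc => hne (dpe_inj hc)⟩
      have hmem_me : ∀ i : Fin m, (deltaW m - epsW i ∈ T') ↔ deltaW m - epsW i ∈ T := by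
        intro i
        rw [hT'def, exch_mem]
        constructor
        · rintro (h | ⟨hmem, _⟩)
          · exact absurd h (dme_ne_delta i)
          · exact hmem
        · intro hmem
          exact Or.inr ⟨hmem, (dpe_ne_dme (C.idx 0) i).symm⟩
      have hT'sub : T' ⊆ Delta1 m := by
        intro x hx
        rw [hT'def] at hx
        rcases exch_mem.1 hx with h | ⟨hmem, _⟩
        · rw [h]; exact delta_mem_delta1
        · exact hT hmem
      have hcard' : T'.card = T.card := exch_card hA hdel
      have hfst' : (tilde m (C.nu p T')).1 = (tilde m (C.nu p T)).1 := by
        rw [C.nu_fst p hT'sub, C.nu_fst p hT, hcard']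
      have heq : tilde m (C.nu p T') = ((tilde m (C.nu p T)).1,
          Function.update (tilde m (C.nu p T)).2 (C.idx 0)
            (-(tilde m (C.nu p T)).2 (C.idx 0))) := by
        refine Prod.ext hfst' (funext fun i => ?_)
        show (tilde m (C.nu p T')).2 i
          = Function.update (tilde m (C.nu p T)).2 (C.idx 0)
              (-(tilde m (C.nu p T)).2 (C.idx 0)) i
        by_cases hi : i = C.idx 0
        · subst hi
          rw [Function.update_self, hx0, C.nu_snd p hT'sub,
            if_neg (fun hc => ((hmem_pe (C.idx 0)).1 hc).1 rfl),
            if_neg (fun hc => hB ((hmem_me (C.idx 0)).1 hc)), C.cidx (Nat.zero_le _)]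
          norm_num
        · rw [Function.update_of_ne hi, C.nu_snd p hT'sub, C.nu_snd p hT,
            if_congr ((hmem_pe i).trans (and_iff_right hi)) rfl rfl,
            if_congr (hmem_me i) rfl rfl]
      have hcond' := C.cond_negate hcond (C.idx 0) heq
      refine ⟨hT'sub, hcond', sgn_update w (C.idx 0), ?_, ?_⟩
      · have hJ' : C.J T' = 0 := C.J_eq T' (Nat.zero_le _)
            (fun hb => ((hmem_pe (C.idx 0)).1 hb.1).1 rfl)
            (fun k hk => absurd hk (Nat.not_lt_zero k))
        unfold move
        rw [hJ', if_neg (fun hc => ((hmem_pe (C.idx 0)).1 hc).1 rfl),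
          if_neg (fun hc => hB ((hmem_me (C.idx 0)).1 hc)), if_pos rfl]
        refine Prod.ext ?_ ?_
        · show insert (deltaW m + epsW (C.idx 0)) (T'.erase (deltaW m)) = T
          rw [hT'def]
          exact exch_exch hA hdel
        · refine Prod.ext rfl ?_
          show Function.update (Function.update w.2 (C.idx 0) (!w.2 (C.idx 0))) (C.idx 0)
            (!(Function.update w.2 (C.idx 0) (!w.2 (C.idx 0)) (C.idx 0))) = w.2
          exact update_bool_invol w.2 (C.idx 0)
      · intro hc
        exact hdel (hc ▸ hmemdel)

  · by_cases hB : deltaW m - epsW (C.idx (C.J T)) ∈ T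
    · -- P01 : un-pair (J, J+1)
      have hcJ : C.c (C.idx (C.J T)) = (C.J T : ℚ) + 1/2 := C.cidx hJq
      have hxvJ : (tilde m (C.nu p T)).2 (C.idx (C.J T)) = (C.J T : ℚ) + 3/2 := by
        rw [C.nu_snd p hT, if_neg hA, if_pos hB, hcJ]
        ring
      set i' := w.1 (C.idx (C.J T)) with hi'def
      have habs' : |(tilde m (C.nu p T)).2 i'| = (C.J T : ℚ) + 1/2 := by
        rw [hi'def, C.hsurj hcond, hcJ]
      have hnneg : 0 ≤ (tilde m (C.nu p T)).2 i' := by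
        by_contra hlt
        push_neg at hlt
        obtain ⟨hi0, hval, hpe', _⟩ := C.neg_struct hT hlt
        rw [hval, abs_neg, abs_of_nonneg (by norm_num : (0:ℚ) ≤ 1/2)] at habs'
        have hJc : (C.J T : ℚ) = 0 := by linarith
        have hJ0 : C.J T = 0 := by exact_mod_cast hJc
        apply hA
        have h3 : C.idx (C.J T) = i' := by rw [hJ0, hi0]
        rw [h3]
        exact hpe'
      have hxv' : (tilde m (C.nu p T)).2 i' = (C.J T : ℚ) + 1/2 := by
        rw [abs_of_nonneg hnneg] at habs'
        exact habs'
      have hclass : deltaW m + epsW i' ∈ T ∧ deltaW m - epsW i' ∉ T := by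
        by_cases h1 : deltaW m + epsW i' ∈ T <;> by_cases h2 : deltaW m - epsW i' ∈ T
        · exfalso
          have hsnd := C.nu_snd p hT i'
          rw [hxv', if_pos h1, if_pos h2] at hsnd
          have hceq : C.c i' = (C.J T:ℚ) + 1/2 := by linarith
          have hii : i' = C.idx (C.J T) := C.cinj (by rw [hceq, hcJ])
          rw [hii, hxvJ] at hxv'
          linarith
        · exact ⟨h1, h2⟩
        · exfalso
          have hsnd := C.nu_snd p hT i'
          rw [hxv', if_neg h1, if_pos h2] at hsnd
          have hceq : C.c i' = (C.J T:ℚ) - 1/2 := by linarith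
          have hJ1 : 1 ≤ C.J T := by
            by_contra hc
            have hz : C.J T = 0 := by omega
            rw [hz] at hceq
            have := C.cpos i'
            rw [hceq] at this
            norm_num at this
          have hii : i' = C.idx (C.J T - 1) := by
            apply C.cinj
            rw [hceq, C.cidx (by omega : C.J T - 1 ≤ C.q), Nat.cast_sub hJ1]
            push_cast
            ring
          apply h1
          rw [hii]
          exact (hpref (C.J T - 1) (by omega)).1
        · exfalso
          have hsnd := C.nu_snd p hT i'
          rw [hxv', if_neg h1, if_neg h2] at hsnd
          have hceq : C.c i' = (C.J T:ℚ) + 1/2 := by linarith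
          have hii : i' = C.idx (C.J T) := C.cinj (by rw [hceq, hcJ])
          rw [hii, hxvJ] at hxv'
          linarith
      obtain ⟨hpe', hme'⟩ := hclass
      have hci' : C.c i' = (C.J T : ℚ) + 3/2 := by
        have hsnd := C.nu_snd p hT i'
        rw [hxv', if_pos hpe', if_neg hme'] at hsnd
        linarith
      have hinj : ∀ x ∈ Finset.range (C.q+1), ∀ y ∈ Finset.range (C.q+1),
          C.idx x = C.idx y → x = y := by
        intro x hx y hy h
        exact C.idx_inj (Nat.lt_succ_iff.1 (Finset.mem_range.1 hx))
          (Nat.lt_succ_iff.1 (Finset.mem_range.1 hy)) h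
      have hJltq : C.J T < C.q := by
        rcases Nat.lt_or_ge (C.J T) C.q with h | h
        · exact h
        · exfalso
          have hJq' : C.J T = C.q := le_antisymm hJq (by omega)
          have hi'notin : i' ∉ (Finset.range (C.q+1)).image C.idx := by
            intro hc
            obtain ⟨j, hj, hji⟩ := Finset.mem_image.1 hc
            have hj' : j ≤ C.q := Nat.lt_succ_iff.1 (Finset.mem_range.1 hj)
            have hcj := C.cidx hj'
            rw [hji, hci'] at hcj
            have : (j:ℚ) = (C.J T : ℚ) + 1 := by linarith
            have : j = C.J T + 1 := by exact_mod_cast this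
            omega
          have hsum := C.cost_le hT hcond (insert i' ((Finset.range (C.q+1)).image C.idx))
          rw [Finset.sum_insert hi'notin, Finset.sum_image hinj] at hsum
          have heval : ∀ j ∈ Finset.range (C.q+1),
              ((if deltaW m + epsW (C.idx j) ∈ T then (1:ℤ) else 0)
                + (if deltaW m - epsW (C.idx j) ∈ T then (1:ℤ) else 0))
              = 2 - (if j = C.q then 1 else 0) := by
            intro j hj
            by_cases hjq : j = C.q
            · subst hjq
              rw [← hJq', if_neg hA, if_pos hB, if_pos rfl]
              norm_num
            · have hjb := hpref j (by
                have := Nat.lt_succ_iff.1 (Finset.mem_range.1 hj)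
                omega)
              rw [if_pos hjb.1, if_pos hjb.2, if_neg hjq]
              norm_num
          rw [Finset.sum_congr rfl heval, Finset.sum_sub_distrib, Finset.sum_const,
            Finset.card_range, Finset.sum_ite_eq' (Finset.range (C.q+1)) C.q (fun _ => (1:ℤ)),
            if_pos (Finset.self_mem_range_succ C.q), nsmul_eq_mul, if_pos hpe'] at hsum
          have h2' : (0:ℤ) ≤ (if deltaW m - epsW i' ∈ T then (1:ℤ) else 0) := by positivity
          push_cast at hsum
          omega
      have hpe'' : deltaW m + epsW (C.idx (C.J T + 1)) ∈ T := by
        have hii : i' = C.idx (C.J T + 1) := by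
          apply C.cinj
          rw [hci', C.cidx (by omega : C.J T + 1 ≤ C.q)]
          push_cast
          ring
        rw [← hii]
        exact hpe'
      have hme'' : deltaW m - epsW (C.idx (C.J T + 1)) ∉ T := by
        have hii : i' = C.idx (C.J T + 1) := by
          apply C.cinj
          rw [hci', C.cidx (by omega : C.J T + 1 ≤ C.q)]
          push_cast
          ring
        rw [← hii]
        exact hme'
      have hcJ1 : C.c (C.idx (C.J T + 1)) = (C.J T : ℚ) + 3/2 := by
        rw [C.cidx (by omega : C.J T + 1 ≤ C.q)]
        push_cast
        ring
      have hne : C.idx (C.J T) ≠ C.idx (C.J T + 1) :=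
        C.idx_ne hJq (by omega) (by omega)
      have hmv : C.move T w
          = (insert (deltaW m + epsW (C.idx (C.J T)))
              (T.erase (deltaW m + epsW (C.idx (C.J T + 1)))),
             (Equiv.swap (C.idx (C.J T)) (C.idx (C.J T + 1)) * w.1,
              w.2 ∘ (Equiv.swap (C.idx (C.J T)) (C.idx (C.J T + 1))))) := by
        unfold move
        rw [if_neg hA, if_pos hB]
      rw [hmv]
      set T' := insert (deltaW m + epsW (C.idx (C.J T)))
          (T.erase (deltaW m + epsW (C.idx (C.J T + 1)))) with hT'def
      have hmempeJ : deltaW m + epsW (C.idx (C.J T)) ∈ T' := Finset.mem_insert_self _ _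
      have hmem_pe : ∀ i : Fin m, (deltaW m + epsW i ∈ T')
          ↔ (i = C.idx (C.J T) ∨ (deltaW m + epsW i ∈ T ∧ ¬ i = C.idx (C.J T + 1))) := by
        intro i
        rw [hT'def, exch_mem]
        constructor
        · rintro (h | ⟨hmem, hne2⟩)
          · exact Or.inl (dpe_inj h)
          · exact Or.inr ⟨hmem, fun hi => hne2 (by rw [hi])⟩
        · rintro (h | ⟨hmem, hne2⟩)
          · exact Or.inl (by rw [h])
          · exact Or.inr ⟨hmem, fun hc => hne2 (dpe_inj hc)⟩
      have hmem_me : ∀ i : Fin m, (deltaW m - epsW i ∈ T') ↔ deltaW m - epsW i ∈ T := by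
        intro i
        rw [hT'def, exch_mem]
        constructor
        · rintro (h | ⟨hmem, _⟩)
          · exact absurd h ((dpe_ne_dme (C.idx (C.J T)) i).symm)
          · exact hmem
        · intro hmem
          exact Or.inr ⟨hmem, (dpe_ne_dme (C.idx (C.J T + 1)) i).symm⟩
      have hT'sub : T' ⊆ Delta1 m := by
        intro x hx
        rw [hT'def] at hx
        rcases exch_mem.1 hx with h | ⟨hmem, _⟩
        · rw [h]; exact dpe_mem_delta1 _
        · exact hT hmem
      have hcard' : T'.card = T.card := exch_card hpe'' hA
      have hfst' : (tilde m (C.nu p T')).1 = (tilde m (C.nu p T)).1 := by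
        rw [C.nu_fst p hT'sub, C.nu_fst p hT, hcard']
      have heq : tilde m (C.nu p T') = ((tilde m (C.nu p T)).1,
          fun i => (tilde m (C.nu p T)).2
            (Equiv.swap (C.idx (C.J T)) (C.idx (C.J T + 1)) i)) := by
        refine Prod.ext hfst' (funext fun i => ?_)
        show (tilde m (C.nu p T')).2 i
          = (tilde m (C.nu p T)).2 (Equiv.swap (C.idx (C.J T)) (C.idx (C.J T + 1)) i)
        by_cases hi1 : i = C.idx (C.J T)
        · subst hi1
          rw [Equiv.swap_apply_left, C.nu_snd p hT'sub, C.nu_snd p hT,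
            if_pos ((hmem_pe _).2 (Or.inl rfl)),
            if_pos ((hmem_me _).2 hB),
            if_pos hpe'', if_neg hme'', hcJ, hcJ1]
          ring
        · by_cases hiJ : i = C.idx (C.J T + 1)
          · subst hiJ
            rw [Equiv.swap_apply_right, C.nu_snd p hT'sub, C.nu_snd p hT,
              if_neg (fun hc => by
                rcases (hmem_pe _).1 hc with h | ⟨_, h⟩
                · exact hne h.symm
                · exact h rfl),
              if_neg (fun hc => hme'' ((hmem_me _).1 hc)),
              if_neg hA, if_pos hB, hcJ, hcJ1]
            ring
          · rw [Equiv.swap_apply_of_ne_of_ne hi1 hiJ, C.nu_snd p hT'sub, C.nu_snd p hT]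
            have h1 : (deltaW m + epsW i ∈ T') ↔ (deltaW m + epsW i ∈ T) := by
              rw [hmem_pe i]
              constructor
              · rintro (h | ⟨hmem, _⟩)
                · exact absurd h hi1
                · exact hmem
              · intro hmem
                exact Or.inr ⟨hmem, hiJ⟩
            rw [if_congr h1 rfl rfl, if_congr (hmem_me i) rfl rfl]
      have hcond' := C.cond_swap hcond (C.idx (C.J T)) (C.idx (C.J T + 1)) heq
      refine ⟨hT'sub, hcond', sgn_swapc w hne, ?_, ?_⟩
      · have hJ' : C.J T' = C.J T + 1 := by
          apply C.J_eq T' (by omega)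
          · intro hb
            rcases (hmem_pe _).1 hb.1 with h | ⟨_, h⟩
            · exact hne h.symm
            · exact h rfl
          · intro k hk
            by_cases hkJ : k = C.J T
            · subst hkJ
              exact ⟨(hmem_pe _).2 (Or.inl rfl), (hmem_me _).2 hB⟩
            · have hkb := hpref k (by omega)
              refine ⟨(hmem_pe _).2 (Or.inr ⟨hkb.1, C.idx_ne (by omega) (by omega) (by omega)⟩),
                (hmem_me _).2 hkb.2⟩
        unfold move
        rw [hJ']
        rw [if_neg (fun hc => by
            rcases (hmem_pe _).1 hc with h | ⟨_, h⟩
            · exact hne h.symm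
            · exact h rfl),
          if_neg (fun hc => hme'' ((hmem_me _).1 hc)),
          if_neg (Nat.succ_ne_zero (C.J T))]
        have hJT : C.J T + 1 - 1 = C.J T := by omega
        rw [hJT]
        refine Prod.ext ?_ ?_
        · show insert (deltaW m + epsW (C.idx (C.J T + 1)))
            (T'.erase (deltaW m + epsW (C.idx (C.J T)))) = T
          rw [hT'def]
          exact exch_exch hpe'' hA
        · refine Prod.ext ?_ ?_
          · show Equiv.swap (C.idx (C.J T)) (C.idx (C.J T + 1))
              * (Equiv.swap (C.idx (C.J T)) (C.idx (C.J T + 1)) * w.1) = w.1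
            rw [← mul_assoc, Equiv.swap_mul_self, one_mul]
          · show (w.2 ∘ Equiv.swap (C.idx (C.J T)) (C.idx (C.J T + 1)))
              ∘ Equiv.swap (C.idx (C.J T)) (C.idx (C.J T + 1)) = w.2
            funext k
            show w.2 (Equiv.swap _ _ (Equiv.swap _ _ k)) = w.2 k
            rw [Equiv.swap_apply_self]
      · intro hc
        exact hA (hc ▸ hmempeJ)

    · by_cases hJ0 : C.J T = 0
      · -- P00 at 0 : flip
        rw [hJ0] at hA hB
        have hx0 : (tilde m (C.nu p T)).2 (C.idx 0) = 1/2 := by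
          rw [C.nu_snd p hT, if_neg hA, if_neg hB, C.cidx (Nat.zero_le _)]
          norm_num
        have hdel : deltaW m ∈ T := by
          apply (C.delta_parity hT hcond).2
          rw [hx0]
          norm_num
        have hmv : C.move T w = (insert (deltaW m + epsW (C.idx 0)) (T.erase (deltaW m)),
            (w.1, Function.update w.2 (C.idx 0) (!w.2 (C.idx 0)))) := by
          unfold move
          rw [hJ0, if_neg hA, if_neg hB, if_pos rfl]
        rw [hmv]
        set T' := insert (deltaW m + epsW (C.idx 0)) (T.erase (deltaW m)) with hT'def
        have hmempe0 : deltaW m + epsW (C.idx 0) ∈ T' := Finset.mem_insert_self _ _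
        have hmem_pe : ∀ i : Fin m, (deltaW m + epsW i ∈ T')
            ↔ (i = C.idx 0 ∨ deltaW m + epsW i ∈ T) := by
          intro i
          rw [hT'def, exch_mem]
          constructor
          · rintro (h | ⟨hmem, _⟩)
            · exact Or.inl (dpe_inj h)
            · exact Or.inr hmem
          · rintro (h | hmem)
            · exact Or.inl (by rw [h])
            · exact Or.inr ⟨hmem, dpe_ne_delta i⟩
        have hmem_me : ∀ i : Fin m, (deltaW m - epsW i ∈ T') ↔ deltaW m - epsW i ∈ T := by
          intro i
          rw [hT'def, exch_mem]
          constructor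
          · rintro (h | ⟨hmem, _⟩)
            · exact absurd h ((dpe_ne_dme (C.idx 0) i).symm)
            · exact hmem
          · intro hmem
            exact Or.inr ⟨hmem, dme_ne_delta i⟩
        have hT'sub : T' ⊆ Delta1 m := by
          intro x hx
          rw [hT'def] at hx
          rcases exch_mem.1 hx with h | ⟨hmem, _⟩
          · rw [h]; exact dpe_mem_delta1 (C.idx 0)
          · exact hT hmem
        have hcard' : T'.card = T.card := exch_card hdel hA
        have hfst' : (tilde m (C.nu p T')).1 = (tilde m (C.nu p T)).1 := by
          rw [C.nu_fst p hT'sub, C.nu_fst p hT, hcard']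
        have heq : tilde m (C.nu p T') = ((tilde m (C.nu p T)).1,
            Function.update (tilde m (C.nu p T)).2 (C.idx 0)
              (-(tilde m (C.nu p T)).2 (C.idx 0))) := by
          refine Prod.ext hfst' (funext fun i => ?_)
          show (tilde m (C.nu p T')).2 i
            = Function.update (tilde m (C.nu p T)).2 (C.idx 0)
                (-(tilde m (C.nu p T)).2 (C.idx 0)) i
          by_cases hi : i = C.idx 0
          · subst hi
            rw [Function.update_self, hx0, C.nu_snd p hT'sub,
              if_pos ((hmem_pe (C.idx 0)).2 (Or.inl rfl)),
              if_neg (fun hc => hB ((hmem_me (C.idx 0)).1 hc)), C.cidx (Nat.zero_le _)]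
            norm_num
          · rw [Function.update_of_ne hi, C.nu_snd p hT'sub, C.nu_snd p hT,
              if_congr ((hmem_pe i).trans (or_iff_right hi)) rfl rfl,
              if_congr (hmem_me i) rfl rfl]
        have hcond' := C.cond_negate hcond (C.idx 0) heq
        refine ⟨hT'sub, hcond', sgn_update w (C.idx 0), ?_, ?_⟩
        · have hJ' : C.J T' = 0 := C.J_eq T' (Nat.zero_le _)
              (fun hb => hB ((hmem_me (C.idx 0)).1 hb.2))
              (fun k hk => absurd hk (Nat.not_lt_zero k))
          unfold move
          rw [hJ', if_pos ((hmem_pe (C.idx 0)).2 (Or.inl rfl)),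
            if_neg (fun hc => hB ((hmem_me (C.idx 0)).1 hc))]
          refine Prod.ext ?_ ?_
          · show insert (deltaW m) (T'.erase (deltaW m + epsW (C.idx 0))) = T
            rw [hT'def]
            exact exch_exch hdel hA
          · refine Prod.ext rfl ?_
            show Function.update (Function.update w.2 (C.idx 0) (!w.2 (C.idx 0))) (C.idx 0)
              (!(Function.update w.2 (C.idx 0) (!w.2 (C.idx 0)) (C.idx 0))) = w.2
            exact update_bool_invol w.2 (C.idx 0)
        · intro hc
          exact hA (hc ▸ hmempe0)

      · -- P00 at J ≥ 1 : pair (J-1, J)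
        have hJ1 : 1 ≤ C.J T := Nat.one_le_iff_ne_zero.2 hJ0
        have hpre := hpref (C.J T - 1) (by omega)
        have hpe1 : deltaW m + epsW (C.idx (C.J T - 1)) ∈ T := hpre.1
        have hme1 : deltaW m - epsW (C.idx (C.J T - 1)) ∈ T := hpre.2
        have hne : C.idx (C.J T - 1) ≠ C.idx (C.J T) := C.idx_ne (by omega) hJq (by omega)
        have hc1 : C.c (C.idx (C.J T - 1)) = (C.J T : ℚ) - 1/2 := by
          rw [C.cidx (by omega : C.J T - 1 ≤ C.q), Nat.cast_sub hJ1]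
          push_cast
          ring
        have hcJ : C.c (C.idx (C.J T)) = (C.J T : ℚ) + 1/2 := C.cidx hJq
        have hmv : C.move T w
            = (insert (deltaW m + epsW (C.idx (C.J T)))
                (T.erase (deltaW m + epsW (C.idx (C.J T - 1)))),
               (Equiv.swap (C.idx (C.J T - 1)) (C.idx (C.J T)) * w.1,
                w.2 ∘ (Equiv.swap (C.idx (C.J T - 1)) (C.idx (C.J T))))) := by
          unfold move
          rw [if_neg hA, if_neg hB, if_neg hJ0]
        rw [hmv]
        set T' := insert (deltaW m + epsW (C.idx (C.J T)))
            (T.erase (deltaW m + epsW (C.idx (C.J T - 1)))) with hT'def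
        have hmempeJ : deltaW m + epsW (C.idx (C.J T)) ∈ T' := Finset.mem_insert_self _ _
        have hmem_pe : ∀ i : Fin m, (deltaW m + epsW i ∈ T')
            ↔ (i = C.idx (C.J T) ∨ (deltaW m + epsW i ∈ T ∧ ¬ i = C.idx (C.J T - 1))) := by
          intro i
          rw [hT'def, exch_mem]
          constructor
          · rintro (h | ⟨hmem, hne2⟩)
            · exact Or.inl (dpe_inj h)
            · exact Or.inr ⟨hmem, fun hi => hne2 (by rw [hi])⟩
          · rintro (h | ⟨hmem, hne2⟩)
            · exact Or.inl (by rw [h])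
            · exact Or.inr ⟨hmem, fun hc => hne2 (dpe_inj hc)⟩
        have hmem_me : ∀ i : Fin m, (deltaW m - epsW i ∈ T') ↔ deltaW m - epsW i ∈ T := by
          intro i
          rw [hT'def, exch_mem]
          constructor
          · rintro (h | ⟨hmem, _⟩)
            · exact absurd h ((dpe_ne_dme (C.idx (C.J T)) i).symm)
            · exact hmem
          · intro hmem
            exact Or.inr ⟨hmem, (dpe_ne_dme (C.idx (C.J T - 1)) i).symm⟩
        have hT'sub : T' ⊆ Delta1 m := by
          intro x hx
          rw [hT'def] at hx
          rcases exch_mem.1 hx with h | ⟨hmem, _⟩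
          · rw [h]; exact dpe_mem_delta1 _
          · exact hT hmem
        have hcard' : T'.card = T.card := exch_card hpe1 hA
        have hfst' : (tilde m (C.nu p T')).1 = (tilde m (C.nu p T)).1 := by
          rw [C.nu_fst p hT'sub, C.nu_fst p hT, hcard']
        have heq : tilde m (C.nu p T') = ((tilde m (C.nu p T)).1,
            fun i => (tilde m (C.nu p T)).2
              (Equiv.swap (C.idx (C.J T - 1)) (C.idx (C.J T)) i)) := by
          refine Prod.ext hfst' (funext fun i => ?_)
          show (tilde m (C.nu p T')).2 i
            = (tilde m (C.nu p T)).2 (Equiv.swap (C.idx (C.J T - 1)) (C.idx (C.J T)) i)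
          by_cases hi1 : i = C.idx (C.J T - 1)
          · subst hi1
            rw [Equiv.swap_apply_left, C.nu_snd p hT'sub, C.nu_snd p hT,
              if_neg (fun hc => by
                rcases (hmem_pe _).1 hc with h | ⟨_, h⟩
                · exact hne h
                · exact h rfl),
              if_pos ((hmem_me _).2 hme1), if_neg hA, if_neg hB, hc1, hcJ]
            ring
          · by_cases hiJ : i = C.idx (C.J T)
            · subst hiJ
              rw [Equiv.swap_apply_right, C.nu_snd p hT'sub, C.nu_snd p hT,
                if_pos ((hmem_pe _).2 (Or.inl rfl)),
                if_neg (fun hc => hB ((hmem_me _).1 hc)),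
                if_pos hpe1, if_pos hme1, hc1, hcJ]
              ring
            · rw [Equiv.swap_apply_of_ne_of_ne hi1 hiJ, C.nu_snd p hT'sub, C.nu_snd p hT]
              have h1 : (deltaW m + epsW i ∈ T') ↔ (deltaW m + epsW i ∈ T) := by
                rw [hmem_pe i]
                constructor
                · rintro (h | ⟨hmem, _⟩)
                  · exact absurd h hiJ
                  · exact hmem
                · intro hmem
                  exact Or.inr ⟨hmem, hi1⟩
              rw [if_congr h1 rfl rfl, if_congr (hmem_me i) rfl rfl]
        have hcond' := C.cond_swap hcond (C.idx (C.J T - 1)) (C.idx (C.J T)) heq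
        refine ⟨hT'sub, hcond', sgn_swapc w hne, ?_, ?_⟩
        · have hJ' : C.J T' = C.J T - 1 := by
            apply C.J_eq T' (by omega)
            · intro hb
              rcases (hmem_pe _).1 hb.1 with h | ⟨_, h⟩
              · exact hne h
              · exact h rfl
            · intro k hk
              have hkb := hpref k (by omega)
              refine ⟨(hmem_pe _).2 (Or.inr ⟨hkb.1, C.idx_ne (by omega) (by omega) (by omega)⟩),
                (hmem_me _).2 hkb.2⟩
          unfold move
          rw [hJ']
          rw [if_neg (fun hc => by
              rcases (hmem_pe _).1 hc with h | ⟨_, h⟩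
              · exact hne h
              · exact h rfl),
            if_pos ((hmem_me _).2 hme1)]
          have hJT : C.J T - 1 + 1 = C.J T := by omega
          rw [hJT]
          refine Prod.ext ?_ ?_
          · show insert (deltaW m + epsW (C.idx (C.J T - 1)))
              (T'.erase (deltaW m + epsW (C.idx (C.J T)))) = T
            rw [hT'def]
            exact exch_exch hpe1 hA
          · refine Prod.ext ?_ ?_
            · show Equiv.swap (C.idx (C.J T - 1)) (C.idx (C.J T))
                * (Equiv.swap (C.idx (C.J T - 1)) (C.idx (C.J T)) * w.1) = w.1
              rw [← mul_assoc, Equiv.swap_mul_self, one_mul]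
            · show (w.2 ∘ Equiv.swap (C.idx (C.J T - 1)) (C.idx (C.J T)))
                ∘ Equiv.swap (C.idx (C.J T - 1)) (C.idx (C.J T)) = w.2
              funext k
              show w.2 (Equiv.swap _ _ (Equiv.swap _ _ k)) = w.2 k
              rw [Equiv.swap_apply_self]
        · intro hc
          exact hA (hc ▸ hmempeJ)


end Setup
namespace Setup
variable {m : ℕ}

open Classical in
theorem key (C : Setup m) : bmult m C.lam1 C.lam0 = 0 := by
  classical
  have hbm : bmult m C.lam1 C.lam0
      = ∑ᶠ p : ℕ, ∑ T ∈ (Delta1 m).powerset, ∑ w : W0T m,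
          (if C.Cond p T w then sgn m w else 0) := by
    unfold bmult Cond nu
    apply finsum_congr
    intro p
    apply Finset.sum_congr rfl
    intro T _
    apply Finset.sum_congr rfl
    intro w _
    congr 1
  rw [hbm]
  set F : ℕ → ℤ := fun p => ∑ T ∈ (Delta1 m).powerset, ∑ w : W0T m,
      (if C.Cond p T w then sgn m w else 0) with hF
  have hzero : ∀ p, p ∉ Finset.range (C.q + 1) → F p = 0 := by
    intro p hp
    rw [hF]
    apply Finset.sum_eq_zero
    intro T hTm
    apply Finset.sum_eq_zero
    intro w _
    rw [if_neg]
    intro hcond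
    have hc := C.card_eqn (Finset.mem_powerset.1 hTm) hcond
    have hp' : C.q + 1 ≤ p := by simpa [Finset.mem_range] using hp
    omega
  have hsupp : Function.support F ⊆ ↑(Finset.range (C.q + 1)) := by
    intro p hp
    by_contra hc
    exact hp (hzero p hc)
  rw [finsum_eq_sum_of_support_subset F hsupp]
  set s : Finset (ℕ × Finset (Wt m) × W0T m) :=
    (Finset.range (C.q + 1)) ×ˢ ((Delta1 m).powerset ×ˢ (Finset.univ : Finset (W0T m)))
    with hs
  have hsum : ∑ p ∈ Finset.range (C.q + 1), F p
      = ∑ x ∈ s, (if C.Cond x.1 x.2.1 x.2.2 then sgn m x.2.2 else 0) := by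
    rw [hs, Finset.sum_product]
    apply Finset.sum_congr rfl
    intro p _
    rw [Finset.sum_product]
  rw [hsum]
  apply Finset.sum_involution
    (g := fun x _ => if C.Cond x.1 x.2.1 x.2.2 then (x.1, C.move x.2.1 x.2.2) else x)
  case hg₁ =>
    intro x hx
    by_cases hc : C.Cond x.1 x.2.1 x.2.2
    · rw [if_pos hc, if_pos hc]
      have hxs := Finset.mem_product.1 hx
      have hT : x.2.1 ⊆ Delta1 m :=
        Finset.mem_powerset.1 (Finset.mem_product.1 hxs.2).1
      obtain ⟨_, hcond', hsgn, _, _⟩ := C.move_spec hT hc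
      rw [if_pos hcond', hsgn]
      ring
    · rw [if_neg hc, if_neg hc, if_neg hc]
      ring
  case hg₃ =>
    intro x hx hne
    have hc : C.Cond x.1 x.2.1 x.2.2 := by
      by_contra hcc
      rw [if_neg hcc] at hne
      exact hne rfl
    rw [if_pos hc]
    have hxs := Finset.mem_product.1 hx
    have hT : x.2.1 ⊆ Delta1 m :=
      Finset.mem_powerset.1 (Finset.mem_product.1 hxs.2).1
    obtain ⟨_, _, _, _, hne'⟩ := C.move_spec hT hc
    intro heq
    exact hne' (congrArg (fun y => y.2.1) heq)
  case g_mem =>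
    intro x hx
    by_cases hc : C.Cond x.1 x.2.1 x.2.2
    · rw [if_pos hc]
      have hxs := Finset.mem_product.1 hx
      have hT : x.2.1 ⊆ Delta1 m :=
        Finset.mem_powerset.1 (Finset.mem_product.1 hxs.2).1
      obtain ⟨hT', _, _, _, _⟩ := C.move_spec hT hc
      rw [hs]
      apply Finset.mem_product.2
      refine ⟨hxs.1, Finset.mem_product.2 ⟨Finset.mem_powerset.2 hT', Finset.mem_univ _⟩⟩
    · rw [if_neg hc]
      exact hx
  case hg₄ =>
    intro x hx
    by_cases hc : C.Cond x.1 x.2.1 x.2.2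
    · rw [if_pos hc]
      have hxs := Finset.mem_product.1 hx
      have hT : x.2.1 ⊆ Delta1 m :=
        Finset.mem_powerset.1 (Finset.mem_product.1 hxs.2).1
      obtain ⟨hT', hcond', _, hinv, _⟩ := C.move_spec hT hc
      have hc2 : C.Cond x.1 (C.move x.2.1 x.2.2).1 (C.move x.2.1 x.2.2).2 := hcond'
      simp only [hc2, if_pos]
      rw [hinv]
    · rw [if_neg hc, if_neg hc]

end Setup
end Osp

open Osp in
/-- identity (28) of the paper for `k = 2m+1`:
`b(λ⁽¹⁾, λ⁽⁰⁾) = 0`, where `λ⁽⁰⁾` is the weight with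
`λ̃⁽⁰⁾ = (−a | the elements of S ∪ {a} in decreasing order)` (with `a` the
smallest positive half-integer not in `S`) and `λ⁽¹⁾ = (λ⁽⁰⁾)^`. -/
theorem bmult_lambda1_lambda0_eq_zero (m : ℕ) (hm : 1 ≤ m)
    (S : Finset ℚ) (hcard : S.card = m - 1)
    (hS : ∀ x ∈ S, ∃ n : ℕ, x = (n : ℚ) + 1 / 2)
    (a : ℚ) (ha : ∃ n : ℕ, a = (n : ℚ) + 1 / 2) (haS : a ∉ S)
    (hmin : ∀ b : ℚ, (∃ n : ℕ, b = (n : ℚ) + 1 / 2) → b ∉ S → a ≤ b)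
    (lam0 lam1 : Wt m)
    (h1 : (tilde m lam0).1 = -a)
    (h2 : (Finset.univ.image fun i => (tilde m lam0).2 i) = insert a S)
    (h3 : ∀ i j : Fin m, i < j → (tilde m lam0).2 j < (tilde m lam0).2 i)
    (hhat : IsHat m lam0 lam1) :
    bmult m lam1 lam0 = 0 := by
  classical
  obtain ⟨n, rfl⟩ := ha
  set c : Fin m → ℚ := fun i => (tilde m lam0).2 i with hc
  have hvalc : ∀ i, c i ∈ insert ((n:ℚ) + 1/2) S := by
    intro i
    rw [← h2]
    exact Finset.mem_image_of_mem _ (Finset.mem_univ i)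
  have hhalf : ∀ i : Fin m, ∃ k : ℕ, c i = (k:ℚ) + 1/2 := by
    intro i
    rcases Finset.mem_insert.1 (hvalc i) with h | h
    · exact ⟨n, h⟩
    · exact hS _ h
  have hcpos : ∀ i, (1:ℚ)/2 ≤ c i := by
    intro i
    obtain ⟨k, hk⟩ := hhalf i
    rw [hk]
    have : (0:ℚ) ≤ k := Nat.cast_nonneg k
    linarith
  have hcinj : Function.Injective c := by
    intro i j h
    rcases lt_trichotomy i j with hx | hx | hx
    · exact absurd h (ne_of_gt (h3 i j hx))
    · exact hx
    · exact absurd h (ne_of_lt (h3 j i hx))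
  have hSlow : ∀ k : ℕ, k < n → ((k:ℚ) + 1/2) ∈ S := by
    intro k hk
    by_contra hns
    have hle := hmin _ ⟨k, rfl⟩ hns
    have : (n:ℚ) ≤ k := by linarith
    have : n ≤ k := by exact_mod_cast this
    omega
  have hmemV : ∀ k : ℕ, k ≤ n → ((k:ℚ) + 1/2) ∈ insert ((n:ℚ) + 1/2) S := by
    intro k hk
    rcases Nat.lt_or_ge k n with h | h
    · exact Finset.mem_insert_of_mem (hSlow k h)
    · have : k = n := by omega
      subst this
      exact Finset.mem_insert_self _ _
  have hcardV : (insert ((n:ℚ) + 1/2) S).card = m := by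
    rw [Finset.card_insert_of_notMem haS, hcard]
    omega
  have hq : n + 1 ≤ m := by
    have hinj : Function.Injective (fun k : ℕ => (k:ℚ) + 1/2) := by
      intro x y h
      simp only [add_left_inj, Nat.cast_inj] at h
      exact h
    have hsub : (Finset.range (n+1)).image (fun k : ℕ => (k:ℚ) + 1/2)
        ⊆ insert ((n:ℚ) + 1/2) S := by
      intro x hx
      obtain ⟨k, hk, rfl⟩ := Finset.mem_image.1 hx
      exact hmemV k (Nat.lt_succ_iff.1 (Finset.mem_range.1 hk))
    have := Finset.card_le_card hsub
    rw [Finset.card_image_of_injective _ hinj, Finset.card_range, hcardV] at this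
    exact this
  -- the position of the value j + 1/2 is m - 1 - j
  have hidx : ∀ j : ℕ, j ≤ n → ∀ (h : m - 1 - j < m),
      c ⟨m - 1 - j, h⟩ = (j:ℚ) + 1/2 := by
    intro j
    induction j using Nat.strong_induction_on with
    | _ j ih =>
      intro hj h
      obtain ⟨t, _, ht⟩ := Finset.mem_image.1 (h2 ▸ hmemV j hj)
      have htle : (t:ℕ) ≤ m - 1 - j := by
        by_contra hgt
        push_neg at hgt
        have htlt : (t:ℕ) < m := t.isLt
        set j' := m - 1 - (t:ℕ) with hj'
        have hj'lt : j' < j := by omega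
        have hvt : c ⟨m - 1 - j', by omega⟩ = (j':ℚ) + 1/2 :=
          ih j' hj'lt (by omega) (by omega)
        have htt : (⟨m - 1 - j', by omega⟩ : Fin m) = t := by
          apply Fin.ext
          show m - 1 - j' = (t:ℕ)
          omega
        rw [htt, ht] at hvt
        have : j = j' := by exact_mod_cast (by linarith : (j:ℚ) = j')
        omega
      have hle : c ⟨m - 1 - j, h⟩ ≤ (j:ℚ) + 1/2 := by
        rcases Nat.lt_or_ge (t:ℕ) (m - 1 - j) with hx | hx
        · have : c ⟨m - 1 - j, h⟩ < c t := h3 t ⟨m - 1 - j, h⟩ hx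
          rw [ht] at this
          linarith
        · have : (t:ℕ) = m - 1 - j := by omega
          have htt : t = (⟨m - 1 - j, h⟩ : Fin m) := Fin.ext this
          rw [← htt, ht]
      have hge : (j:ℚ) + 1/2 ≤ c ⟨m - 1 - j, h⟩ := by
        obtain ⟨k, hk⟩ := hhalf ⟨m - 1 - j, h⟩
        rcases Nat.eq_zero_or_pos j with hj0 | hj0
        · subst hj0
          rw [hk]
          have : (0:ℚ) ≤ k := Nat.cast_nonneg k
          push_cast
          linarith
        · have hprev : c ⟨m - 1 - (j-1), by omega⟩ = ((j-1 : ℕ):ℚ) + 1/2 :=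
            ih (j-1) (by omega) (by omega) (by omega)
          have hlt : c ⟨m - 1 - (j-1), by omega⟩ < c ⟨m - 1 - j, h⟩ := by
            apply h3
            show m - 1 - j < m - 1 - (j - 1)
            omega
          rw [hprev, hk] at hlt
          rw [hk]
          have hcast : ((j-1 : ℕ):ℚ) = (j:ℚ) - 1 := by
            rw [Nat.cast_sub hj0]
            push_cast
            ring
          rw [hcast] at hlt
          have hjk : j - 1 < k := by
            have h' : ((j-1:ℕ):ℚ) < k := by
              rw [hcast]
              linarith
            exact_mod_cast h'
          have hkj : j ≤ k := by omega
          have : (j:ℚ) ≤ k := by exact_mod_cast hkj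
          linarith
      linarith
  -- analyse IsHat
  obtain ⟨γ, hγ, t₀, ht₀, hregt, hminr, hdom, w, hw⟩ := hhat
  obtain ⟨l, hl⟩ := hγ
  have hγl : γ = deltaW m - epsW l ∧ c l = (n:ℚ) + 1/2 := by
    rcases hl with ⟨hγeq, hval⟩ | ⟨hγeq, hval⟩
    · exfalso
      have hval' : -((n:ℚ) + 1/2) = c l := by rw [← h1]; exact hval
      have := hcpos l
      have hn0 : (0:ℚ) ≤ n := Nat.cast_nonneg n
      linarith
    · have hval' : -((n:ℚ) + 1/2) = -(c l) := by rw [← h1]; exact hval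
      exact ⟨hγeq, by linarith⟩
  obtain ⟨hγeq, hcl⟩ := hγl
  subst hγeq
  have hl_idx : l = ⟨m - 1 - n, by omega⟩ := by
    apply hcinj
    rw [hcl, hidx n le_rfl]
  have hgam1 : ∀ t : ℚ, (tilde m (lam0 + t • (deltaW m - epsW l))).1
      = -((n:ℚ) + 1/2) + t := by
    intro t
    rw [tilde_add]
    show (tilde m lam0).1 + t * ((1:ℚ) - 0) = _
    rw [h1]
    ring
  have hgam2 : ∀ (t : ℚ) (i : Fin m), (tilde m (lam0 + t • (deltaW m - epsW l))).2 i
      = c i - (if i = l then t else 0) := by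
    intro t i
    rw [tilde_add]
    have hstep : (tilde m lam0 + t • (deltaW m - epsW l)).2 i
        = (tilde m lam0).2 i + t * (0 - (Pi.single l 1 : Fin m → ℚ) i) := rfl
    rw [hstep, Pi.single_apply]
    by_cases hi : i = l <;> simp [hi]
    ring
    rfl
  have habsmu : ∀ (t : ℚ), t = 2*(n:ℚ)+1 →
      ∀ i, |(tilde m (lam0 + t • (deltaW m - epsW l))).2 i| = c i := by
    intro t htv i
    rw [hgam2]
    by_cases hi : i = l
    · subst hi
      rw [if_pos rfl, hcl, htv]
      have : (n:ℚ) + 1/2 - (2*(n:ℚ)+1) = -((n:ℚ)+1/2) := by ring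
      rw [this, abs_neg, abs_of_nonneg (by positivity : (0:ℚ) ≤ (n:ℚ)+1/2)]
    · rw [if_neg hi, sub_zero, abs_of_nonneg (le_trans (by norm_num) (hcpos i))]
  have hreg2n : Regular m (lam0 + ((2*n+1 : ℕ):ℚ) • (deltaW m - epsW l)) := by
    intro i j hij
    have hcast : ((2*n+1 : ℕ):ℚ) = 2*(n:ℚ)+1 := by push_cast; ring
    rw [habsmu _ hcast i, habsmu _ hcast j] at hij
    exact hcinj hij
  have hnreg : ∀ t : ℕ, 0 < t → t < 2*n+1 →
      ¬ Regular m (lam0 + (t:ℚ) • (deltaW m - epsW l)) := by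
    intro t ht0 htlt hregc
    set k : ℕ := if t ≤ n then n - t else t - n - 1 with hk
    have hkn : k < n := by
      rw [hk]
      split <;> omega
    have habsl : |(tilde m (lam0 + (t:ℚ) • (deltaW m - epsW l))).2 l| = (k:ℚ) + 1/2 := by
      rw [hgam2, if_pos rfl, hcl]
      rcases le_or_gt t n with hx | hx
      · have hkv : k = n - t := by rw [hk, if_pos hx]
        have : (n:ℚ) + 1/2 - t = (k:ℚ) + 1/2 := by
          rw [hkv, Nat.cast_sub hx]
          ring
        rw [this, abs_of_nonneg (by positivity)]
      · have hkv : k = t - n - 1 := by rw [hk, if_neg (by omega)]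
        have h9 : ((t - n - 1 : ℕ):ℚ) = (t:ℚ) - n - 1 := by
          have he : t - n - 1 = t - (n+1) := by omega
          rw [he, Nat.cast_sub (by omega : n + 1 ≤ t)]
          push_cast
          ring
        have : (n:ℚ) + 1/2 - t = -((k:ℚ) + 1/2) := by
          rw [hkv, h9]
          ring
        rw [this, abs_neg, abs_of_nonneg (by positivity)]
    have hidxk : c ⟨m-1-k, by omega⟩ = (k:ℚ)+1/2 := hidx k (by omega) (by omega)
    have hnel : (⟨m-1-k, by omega⟩ : Fin m) ≠ l := by
      rw [hl_idx]
      intro hcon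
      have := congrArg Fin.val hcon
      simp only [] at this
      omega
    have habsk : |(tilde m (lam0 + (t:ℚ) • (deltaW m - epsW l))).2 ⟨m-1-k, by omega⟩|
        = (k:ℚ) + 1/2 := by
      rw [hgam2, if_neg hnel, sub_zero, abs_of_nonneg (le_trans (by norm_num) (hcpos _)), hidxk]
    exact hnel (hregc _ l (habsk.trans habsl.symm))
  have ht₀eq : t₀ = 2*n+1 := by
    rcases lt_trichotomy t₀ (2*n+1) with hx | hx | hx
    · exact absurd hregt (hnreg t₀ ht₀ hx)
    · exact hx
    · exact absurd hreg2n (hminr (2*n+1) (by omega) hx)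
  subst ht₀eq
  have hfst1 : (tilde m lam1).1 = (n:ℚ) + 1/2 := by
    have h5 := congrArg Prod.fst hw
    rw [tact_fst, hgam1] at h5
    rw [h5]
    push_cast
    ring
  have hdpos : ∀ i : Fin m, 0 < (tilde m lam1).2 i := by
    intro i
    show 0 < lam1.2 i + (m:ℚ) - 1/2 - ((i:ℕ):ℚ)
    have h01 := hdom.2 i
    have hi1 : (i:ℕ) ≤ m - 1 := by
      have := i.isLt
      omega
    have hi2 : ((i:ℕ):ℚ) ≤ (m:ℚ) - 1 := by
      have : ((i:ℕ):ℚ) ≤ ((m-1 : ℕ):ℚ) := by exact_mod_cast hi1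
      rw [Nat.cast_sub hm] at this
      simpa using this
    linarith
  have hcast2 : ((2*n+1 : ℕ):ℚ) = 2*(n:ℚ)+1 := by push_cast; ring
  have hval1 : ∀ i, (tilde m lam1).2 i = c (w.1⁻¹ i) := by
    intro i
    have hwi := congrArg (fun x => x.2 i) hw
    have habs1 : |(tilde m lam1).2 i|
        = |(tilde m (lam0 + ((2*n+1 : ℕ):ℚ) • (deltaW m - epsW l))).2 (w.1⁻¹ i)| := by
      rw [hwi, tact_snd]
      cases hb : w.2 i <;> simp [hb]
    rw [habsmu _ hcast2 (w.1⁻¹ i)] at habs1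
    rw [← habs1, abs_of_pos (hdpos i)]
  have hmono : StrictMono (fun i => w.1⁻¹ i) := by
    intro i j hij
    have hanti1 : (tilde m lam1).2 j < (tilde m lam1).2 i := by
      show lam1.2 j + (m:ℚ) - 1/2 - ((j:ℕ):ℚ) < lam1.2 i + (m:ℚ) - 1/2 - ((i:ℕ):ℚ)
      have hle := hdom.1 i j (le_of_lt hij)
      have hij' : ((i:ℕ):ℚ) < ((j:ℕ):ℚ) := by
        have : (i:ℕ) < (j:ℕ) := hij
        exact_mod_cast this
      linarith
    rw [hval1 i, hval1 j] at hanti1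
    by_contra hcon
    push_neg at hcon
    rcases lt_or_eq_of_le hcon with hx | hx
    · have hcc : c (w.1⁻¹ i) < c (w.1⁻¹ j) := h3 _ _ hx
      linarith
    · rw [hx] at hanti1
      exact lt_irrefl _ hanti1
  have hsigma : (fun i => w.1⁻¹ i) = id := by
    apply (hmono.range_inj strictMono_id).1
    rw [Set.range_id]
    exact (w.1⁻¹).surjective.range_eq
  have htail1 : (tilde m lam1).2 = (tilde m lam0).2 := by
    funext i
    rw [hval1 i, show w.1⁻¹ i = i from congrFun hsigma i]
  exact Osp.Setup.key
    { q := n, lam0 := lam0, lam1 := lam1, hq := hq, hfst0 := h1, hfst1 := hfst1,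
      htail := htail1, hanti := h3, hhalf := hhalf, hidx := hidx }


end
end

section
/- Let S be a set of m−1 distinct positive half-integers, and let λ^{(i)} (i ≥ 0) be as in the context. Then b(λ^{(i)}, λ^{(i−1)}) = 1 for every i ≥ 2. (This is the multiplicity computation b_{λ^{(i)},λ^{(i−1)}} = 1 asserted in the proof of Theorem 3.10, for k = 2m+1.) -/
/-!
Combinatorics of weights for the orthosymplectic Lie superalgebra
`osp_{2m+1|2} = B(m,1)` (so `k = 2m+1`, `s = 1/2`), with its distinguished
Borel subalgebra.  A weight is a tuple `λ = (λ₀ | λ₁, …, λ_m) ∈ ℚ^{m+1}`,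
encoded as `ℚ × (Fin m → ℚ)` (the index `i : Fin m` stands for the coordinate
`λ_{i+1}`).
-/

open Finset

noncomputable section

/-- `x` is a positive half-integer `n + 1/2` with `n : ℕ`. -/
def HIp (x : ℚ) : Prop := ∃ n : ℕ, x = (n : ℚ) + 1 / 2

lemma HIp.pos {x : ℚ} (h : HIp x) : 0 < x := by
  obtain ⟨n, rfl⟩ := h; positivity

lemma HIp.add_one_le {x y : ℚ} (hx : HIp x) (hy : HIp y) (h : x < y) : x + 1 ≤ y := by
  obtain ⟨n, rfl⟩ := hx; obtain ⟨k, rfl⟩ := hy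
  have hnk : n < k := by exact_mod_cast (by linarith : (n : ℚ) < k)
  have : (n : ℚ) + 1 ≤ k := by exact_mod_cast hnk
  linarith

lemma HIp.sub_one {x : ℚ} (hx : HIp x) (h : (1 : ℚ) < x) : HIp (x - 1) := by
  obtain ⟨n, rfl⟩ := hx
  have hn : 1 ≤ n := by
    rcases Nat.eq_zero_or_pos n with h0 | h1
    · subst h0; norm_num at h
    · exact h1
  exact ⟨n - 1, by push_cast [hn]; ring⟩

lemma HIp.add_one {x : ℚ} (hx : HIp x) : HIp (x + 1) := by
  obtain ⟨n, rfl⟩ := hx; exact ⟨n + 1, by push_cast; ring⟩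

lemma tilde_fst (m : ℕ) (u : Wt m) : (tilde m u).1 = u.1 + 1 / 2 - m := rfl

lemma tilde_sub_fst (m : ℕ) (u v : Wt m) :
    (tilde m (u - v)).1 = (tilde m u).1 - v.1 := by
  simp [tilde]; ring

lemma tilde_sub_snd (m : ℕ) (u v : Wt m) (i : Fin m) :
    (tilde m (u - v)).2 i = (tilde m u).2 i - v.2 i := by
  simp [tilde]; ring

lemma tilde_add_smul_fst (m : ℕ) (u γ : Wt m) (c : ℚ) :
    (tilde m (u + c • γ)).1 = (tilde m u).1 + c * γ.1 := by
  simp [tilde]; ring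

lemma tilde_add_smul_snd (m : ℕ) (u γ : Wt m) (c : ℚ) (i : Fin m) :
    (tilde m (u + c • γ)).2 i = (tilde m u).2 i + c * γ.2 i := by
  simp [tilde]; ring

lemma mem_Delta1 {m : ℕ} {β : Wt m} :
    β ∈ Delta1 m ↔ β = deltaW m ∨ (∃ i, β = deltaW m + epsW i) ∨
      ∃ i, β = deltaW m - epsW i := by
  simp [Delta1, Finset.mem_union, Finset.mem_image, eq_comm]

lemma Delta1_fst {m : ℕ} {β : Wt m} (h : β ∈ Delta1 m) : β.1 = 1 := by
  rcases mem_Delta1.1 h with rfl | ⟨i, rfl⟩ | ⟨i, rfl⟩ <;> simp [deltaW, epsW]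

lemma epsW_injective {m : ℕ} : Function.Injective (epsW (m := m)) := by
  intro i j h
  by_contra hne
  have := congrFun (congrArg Prod.snd h) i
  simp [epsW, Pi.single_apply, hne, Ne.symm hne] at this

lemma plus_root_injective {m : ℕ} :
    Function.Injective (fun i : Fin m => deltaW m + epsW i) := by
  intro i j h
  apply epsW_injective
  have := congrArg (fun x => x - deltaW m) h
  simpa using this

lemma plus_root_snd {m : ℕ} (i : Fin m) (j : Fin m) :
    (deltaW m + epsW i).2 j = if i = j then 1 else 0 := by
  simp [deltaW, epsW, Pi.single_apply, eq_comm]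

lemma minus_root_snd {m : ℕ} (i : Fin m) (j : Fin m) :
    (deltaW m - epsW i).2 j = if i = j then -1 else 0 := by
  rcases eq_or_ne i j with rfl | h
  · simp [deltaW, epsW, Pi.single_apply]
  · simp [deltaW, epsW, Pi.single_apply, h, Ne.symm h]

lemma deltaW_snd {m : ℕ} (j : Fin m) : (deltaW m).2 j = 0 := rfl

/-- Sum of second components over all coordinates for elements of `Δ₁⁺`. -/
lemma esum_le_one {m : ℕ} {β : Wt m} (h : β ∈ Delta1 m) :
    ∑ j, β.2 j ≤ 1 := by
  rcases mem_Delta1.1 h with rfl | ⟨i, rfl⟩ | ⟨i, rfl⟩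
  · simp [deltaW]
  · simp [plus_root_snd, Finset.sum_ite_eq]
  · simp only [minus_root_snd, Finset.sum_ite_eq, Finset.mem_univ, if_true]
    norm_num
lemma strictAnti_eq_of_mem {m : ℕ} {s : Finset ℚ} (hs : s.card = m)
    {f g : Fin m → ℚ} (hf : StrictAnti f) (hg : StrictAnti g)
    (hfs : ∀ j, f j ∈ s) (hgs : ∀ j, g j ∈ s) : f = g := by
  have hrev : ∀ {h : Fin m → ℚ}, StrictAnti h → StrictMono (fun i : Fin m => h i.rev) := by
    intro h hh i j hij
    exact hh (by simpa [Fin.rev_lt_rev] using hij)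
  have hf' := Finset.orderEmbOfFin_unique hs (f := fun i : Fin m => f i.rev)
    (fun i => hfs _) (hrev hf)
  have hg' := Finset.orderEmbOfFin_unique hs (f := fun i : Fin m => g i.rev)
    (fun i => hgs _) (hrev hg)
  funext j
  have := congrFun (hf'.trans hg'.symm) j.rev
  simpa using this

lemma tact_fst {m : ℕ} (w : W0T m) (v : Wt m) : (tact m w v).1 = v.1 := rfl

lemma tact_snd {m : ℕ} (w : W0T m) (v : Wt m) (j : Fin m) :
    (tact m w v).2 j = (if w.2 j then (-1 : ℚ) else 1) * v.2 (w.1⁻¹ j) := rfl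

lemma sgn_one (m : ℕ) : sgn m (1, fun _ => false) = 1 := by
  simp [sgn]

lemma smul_delta_fst {m : ℕ} (c : ℚ) : (c • deltaW m).1 = c := by
  simp [deltaW]

lemma smul_delta_snd {m : ℕ} (c : ℚ) (j : Fin m) : (c • deltaW m).2 j = 0 := by
  simp [deltaW]

lemma sum_fst_of_subset_Delta1 {m : ℕ} {T : Finset (Wt m)} (hT : T ⊆ Delta1 m) :
    (T.sum id).1 = T.card := by
  rw [Prod.fst_sum]
  simp only [id_eq]
  rw [Finset.sum_congr rfl (fun β hβ => Delta1_fst (hT hβ))]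
  simp

lemma sum_snd_apply {m : ℕ} (T : Finset (Wt m)) (j : Fin m) :
    (T.sum id).2 j = ∑ β ∈ T, β.2 j := by
  rw [Prod.snd_sum, Finset.sum_apply]
  simp
lemma bmult_eq_one' (m : ℕ) (S : Finset ℚ) (hS : ∀ x ∈ S, HIp x)
    (lam mu : Wt m) (A A' : ℚ) (hA : HIp A) (hA' : HIp A')
    (hAS : A ∉ S) (hA'S : A' ∉ S) (hlt : A < A')
    (hbet : ∀ x, HIp x → A < x → x < A' → x ∈ S)
    (hmu1 : (tilde m mu).1 = A) (hmu2 : StrictAnti (tilde m mu).2)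
    (hmu3 : Finset.univ.image (tilde m mu).2 = insert A S)
    (hlam1 : (tilde m lam).1 = A') (hlam2 : StrictAnti (tilde m lam).2)
    (hlam3 : Finset.univ.image (tilde m lam).2 = insert A' S) :
    bmult m lam mu = 1 := by
  classical
  set f := (tilde m lam).2 with hfdef
  set u := (tilde m mu).2 with hudef
  have hinsHI : ∀ x ∈ insert A S, HIp x := by
    intro x hx; rcases Finset.mem_insert.1 hx with rfl | hx
    · exact hA
    · exact hS x hx
  have hins'HI : ∀ x ∈ insert A' S, HIp x := by
    intro x hx; rcases Finset.mem_insert.1 hx with rfl | hx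
    · exact hA'
    · exact hS x hx
  have hfmem : ∀ j, f j ∈ insert A' S := by
    intro j; rw [← hlam3]; exact Finset.mem_image_of_mem _ (Finset.mem_univ j)
  have humem : ∀ j, u j ∈ insert A S := by
    intro j; rw [← hmu3]; exact Finset.mem_image_of_mem _ (Finset.mem_univ j)
  have hfHI : ∀ j, HIp (f j) := fun j => hins'HI _ (hfmem j)
  have huHI : ∀ j, HIp (u j) := fun j => hinsHI _ (humem j)
  have hupos : ∀ j, 0 < u j := fun j => (huHI j).pos
  have hAnotin : A ∉ insert A' S := by
    simp only [Finset.mem_insert]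
    push_neg
    exact ⟨hlt.ne, hAS⟩
  have hfinj : Function.Injective f := hlam2.injective
  have hcardm : (insert A S).card = m := by
    rw [← hmu3, Finset.card_image_of_injective _ hmu2.injective, Finset.card_univ,
      Fintype.card_fin]
  set J0 : Finset (Fin m) := Finset.univ.filter (fun j => A < f j ∧ f j ≤ A') with hJ0def
  have hg_anti : StrictAnti (fun j => f j - if A < f j ∧ f j ≤ A' then 1 else 0) := by
    intro i j hij
    have hxy : f j < f i := hlam2 hij
    simp only
    by_cases hi : A < f i ∧ f i ≤ A' <;> by_cases hj : A < f j ∧ f j ≤ A'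
    · rw [if_pos hi, if_pos hj]; linarith
    · -- i moved, j not : f j ≤ A, in fact f j < A
      rw [if_pos hi, if_neg hj]
      have hjA : ¬ A < f j := by
        intro hc
        exact hj ⟨hc, le_trans hxy.le hi.2⟩
      push_neg at hjA
      have hne : f j ≠ A := by
        intro hc; rw [← hc] at hAnotin; exact hAnotin (hfmem j)
      have h1 : A + 1 ≤ f i := HIp.add_one_le hA (hfHI i) hi.1
      have : f j < A := lt_of_le_of_ne hjA hne
      linarith
    · -- j moved, i not
      rw [if_neg hi, if_pos hj]
      have hiA' : A' < f i := by
        rcases not_and_or.1 hi with h | h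
        · push_neg at h; linarith [hj.1]
        · push_neg at h; exact h
      linarith [hj.2]
    · rw [if_neg hi, if_neg hj]; linarith
  have hg_mem : ∀ j, (f j - if A < f j ∧ f j ≤ A' then 1 else 0) ∈ insert A S := by
    intro j
    by_cases hj : A < f j ∧ f j ≤ A'
    · rw [if_pos hj]
      rcases eq_or_lt_of_le (HIp.add_one_le hA (hfHI j) hj.1) with heq | hltj
      · rw [← heq]
        simp
      · have h1 : 1 < f j := by have := hA.pos; linarith
        have h2 : f j - 1 ∈ S := hbet _ (HIp.sub_one (hfHI j) h1) (by linarith) (by linarith [hj.2])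
        exact Finset.mem_insert_of_mem h2
    · rw [if_neg hj, sub_zero]
      have h1 : f j ∈ insert A' S := hfmem j
      rcases Finset.mem_insert.1 h1 with heq | hmem
      · exfalso; exact hj ⟨heq ▸ hlt, heq.le⟩
      · exact Finset.mem_insert_of_mem hmem
  have hg_eq : (fun j => f j - if A < f j ∧ f j ≤ A' then 1 else 0) = u :=
    strictAnti_eq_of_mem hcardm hg_anti hmu2 hg_mem humem
  have hsumf : ∑ j, f j = A' + ∑ x ∈ S, x := by
    have h1 : ∑ x ∈ insert A' S, x = ∑ j, f j := by
      rw [← hlam3, Finset.sum_image (fun x _ y _ h => hfinj h)]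
    rw [Finset.sum_insert hA'S] at h1; linarith
  have hsumu : ∑ j, u j = A + ∑ x ∈ S, x := by
    have h1 : ∑ x ∈ insert A S, x = ∑ j, u j := by
      rw [← hmu3, Finset.sum_image (fun x _ y _ h => hmu2.injective h)]
    rw [Finset.sum_insert hAS] at h1; linarith
  have hJ0card : (J0.card : ℚ) = A' - A := by
    have h1 : ∑ j, (f j - if A < f j ∧ f j ≤ A' then 1 else 0) = ∑ j, u j := by
      rw [← hg_eq]
    rw [Finset.sum_sub_distrib, Finset.sum_boole] at h1
    rw [hJ0def]
    linarith
  set w0 : W0T m := (1, fun _ => false) with hw0def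
  set T0 : Finset (Wt m) := J0.image (fun j => deltaW m + epsW j) with hT0def
  have hT0sub : T0 ⊆ Delta1 m := by
    intro β hβ
    obtain ⟨i, _, rfl⟩ := Finset.mem_image.1 hβ
    exact mem_Delta1.2 (Or.inr (Or.inl ⟨i, rfl⟩))
  have hT0card : (T0.card : ℚ) = A' - A := by
    rw [hT0def, Finset.card_image_of_injective _ plus_root_injective]
    exact hJ0card
  have hnu1 : ∀ (T : Finset (Wt m)) (p : ℕ), T ⊆ Delta1 m →
      (tilde m (lam - T.sum id - ((2 * p : ℕ) : ℚ) • deltaW m)).1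
        = A' - (T.card : ℚ) - 2 * (p : ℚ) := by
    intro T p hT
    rw [tilde_sub_fst, tilde_sub_fst, hlam1, sum_fst_of_subset_Delta1 hT, smul_delta_fst]
    push_cast; ring
  have hnu2 : ∀ (T : Finset (Wt m)) (p : ℕ) (j : Fin m),
      (tilde m (lam - T.sum id - ((2 * p : ℕ) : ℚ) • deltaW m)).2 j
        = f j - (T.sum id).2 j := by
    intro T p j
    rw [tilde_sub_snd, tilde_sub_snd, smul_delta_snd]
    ring
  have hT0sum2 : ∀ j, (T0.sum id).2 j = if j ∈ J0 then 1 else 0 := by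
    intro j
    rw [sum_snd_apply, hT0def, Finset.sum_image (fun x _ y _ h => plus_root_injective h)]
    have h1 : ∀ i, (deltaW m + epsW i).2 j = (Pi.single i (1 : ℚ) : Fin m → ℚ) j := by
      intro i; simp [deltaW, epsW]
    rw [Finset.sum_congr rfl fun i _ => h1 i]
    exact Finset.sum_pi_single j (fun _ => (1 : ℚ)) J0
  have hite : ∀ j, (if j ∈ J0 then (1:ℚ) else 0) = if A < f j ∧ f j ≤ A' then 1 else 0 := by
    intro j
    simp only [hJ0def, Finset.mem_filter, Finset.mem_univ, true_and]
  have hwitness_eq : tilde m (lam - T0.sum id - ((2 * 0 : ℕ) : ℚ) • deltaW m)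
      = tact m w0 (tilde m mu) := by
    have hfst : (tilde m (lam - T0.sum id - ((2 * 0 : ℕ) : ℚ) • deltaW m)).1
        = (tact m w0 (tilde m mu)).1 := by
      rw [hnu1 T0 0 hT0sub, tact_fst, hmu1, hT0card]
      push_cast; ring
    have hsnd : (tilde m (lam - T0.sum id - ((2 * 0 : ℕ) : ℚ) • deltaW m)).2
        = (tact m w0 (tilde m mu)).2 := by
      funext j
      rw [hnu2, hT0sum2 j, tact_snd, hite j]
      have h2 := congrFun hg_eq j
      rw [h2, hw0def]
      simp
      rfl
    exact Prod.ext hfst hsnd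
  have hwitness_reg : Regular m (lam - T0.sum id - ((2 * 0 : ℕ) : ℚ) • deltaW m) := by
    intro i j hij
    rw [hnu2, hnu2, hT0sum2, hT0sum2, hite i, hite j] at hij
    rw [congrFun hg_eq i, congrFun hg_eq j, abs_of_pos (hupos i), abs_of_pos (hupos j)] at hij
    exact hmu2.injective hij
  have huniq : ∀ (p : ℕ) (T : Finset (Wt m)) (w : W0T m), T ⊆ Delta1 m →
      tilde m (lam - T.sum id - ((2 * p : ℕ) : ℚ) • deltaW m) = tact m w (tilde m mu) →
      p = 0 ∧ T = T0 ∧ w = w0 := by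
    intro p T w hT heq
    have h1 : A' - (T.card : ℚ) - 2 * (p : ℚ) = A := by
      have h := congrArg Prod.fst heq
      rw [hnu1 T p hT, tact_fst, hmu1] at h
      exact h
    have hsnd : ∀ j, f j - (T.sum id).2 j
        = (if w.2 j then (-1 : ℚ) else 1) * u (w.1⁻¹ j) := by
      intro j
      have h := congrFun (congrArg Prod.snd heq) j
      rw [hnu2 T p j, tact_snd] at h
      exact h
    have hsumt : ∑ j, (T.sum id).2 j = ∑ β ∈ T, ∑ j, β.2 j := by
      rw [Finset.sum_congr rfl (fun j _ => sum_snd_apply T j)]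
      exact Finset.sum_comm
    have hEle : ∑ β ∈ T, ∑ j, β.2 j ≤ (T.card : ℚ) := by
      calc ∑ β ∈ T, ∑ j, β.2 j ≤ ∑ _β ∈ T, (1 : ℚ) :=
            Finset.sum_le_sum (fun β hβ => esum_le_one (hT hβ))
        _ = T.card := by simp
    have htermle : ∀ j : Fin m, j ∈ Finset.univ →
        (if w.2 j then (-1 : ℚ) else 1) * u (w.1⁻¹ j) ≤ u (w.1⁻¹ j) := by
      intro j _
      by_cases hw : w.2 j
      · rw [if_pos hw]; have := hupos (w.1⁻¹ j); linarith
      · rw [if_neg hw, one_mul]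
    have hRHSle : ∑ j, (if w.2 j then (-1 : ℚ) else 1) * u (w.1⁻¹ j) ≤ ∑ j, u (w.1⁻¹ j) :=
      Finset.sum_le_sum htermle
    have hperm : ∑ j, u (w.1⁻¹ j) = ∑ j, u j := Equiv.sum_comp w.1⁻¹ u
    have hsum_eq : ∑ j, (f j - (T.sum id).2 j)
        = ∑ j, (if w.2 j then (-1 : ℚ) else 1) * u (w.1⁻¹ j) :=
      Finset.sum_congr rfl (fun j _ => hsnd j)
    have hLHS : ∑ j, (f j - (T.sum id).2 j) = ∑ j, f j - ∑ β ∈ T, ∑ j, β.2 j := by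
      rw [Finset.sum_sub_distrib, hsumt]
    have hEge : A' - A ≤ ∑ β ∈ T, ∑ j, β.2 j := by
      have := hsum_eq
      rw [hLHS] at this
      rw [this] at *
      linarith [hRHSle, hperm, hsumf, hsumu]
    have hp0 : p = 0 := by
      have : (p : ℚ) ≤ 0 := by linarith
      exact_mod_cast le_antisymm this (by positivity)
    have hEeq : ∑ β ∈ T, ∑ j, β.2 j = (T.card : ℚ) := by
      have : (T.card : ℚ) + 2 * (p : ℚ) = A' - A := by linarith
      rw [hp0] at this
      push_cast at this
      linarith
    have hplus : ∀ β ∈ T, ∑ j, β.2 j = 1 := by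
      have h2 : ∑ β ∈ T, ∑ j, β.2 j = ∑ _β ∈ T, (1 : ℚ) := by
        rw [hEeq]; simp
      exact fun β hβ =>
        (Finset.sum_eq_sum_iff_of_le (fun β hβ => esum_le_one (hT hβ))).1 h2 β hβ
    have hform : ∀ β ∈ T, ∃ i, β = deltaW m + epsW i := by
      intro β hβ
      rcases mem_Delta1.1 (hT hβ) with hδ | ⟨i, hi⟩ | ⟨i, hi⟩
      · exfalso
        have := hplus β hβ
        rw [hδ] at this
        simp [deltaW] at this
      · exact ⟨i, hi⟩
      · exfalso
        have := hplus β hβ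
        rw [hi] at this
        rw [Finset.sum_congr rfl (fun j _ => minus_root_snd i j)] at this
        simp only [Finset.sum_ite_eq, Finset.mem_univ, if_true] at this
        norm_num at this
    have hsgn_sum : ∑ j, (if w.2 j then (-1 : ℚ) else 1) * u (w.1⁻¹ j)
        = ∑ j, u (w.1⁻¹ j) := by
      rw [← hsum_eq, hLHS, hEeq, hperm, hsumf, hsumu]
      have h1' := h1
      rw [hp0] at h1'
      push_cast at h1'
      linarith
    have hwfalse : ∀ j, w.2 j = false := by
      intro j
      have h2 := (Finset.sum_eq_sum_iff_of_le htermle).1 hsgn_sum j (Finset.mem_univ j)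
      by_cases hw : w.2 j
      · exfalso
        rw [if_pos hw] at h2
        have := hupos (w.1⁻¹ j)
        nlinarith
      · simp [hw]
    have hsnd' : ∀ j, f j - (T.sum id).2 j = u (w.1⁻¹ j) := by
      intro j
      rw [hsnd j, hwfalse j]
      simp
    set J : Finset (Fin m) := Finset.univ.filter (fun j => deltaW m + epsW j ∈ T) with hJdef
    have hTJ : T = J.image (fun j => deltaW m + epsW j) := by
      ext β
      constructor
      · intro hβ
        obtain ⟨i, rfl⟩ := hform β hβ
        exact Finset.mem_image_of_mem _ (Finset.mem_filter.2 ⟨Finset.mem_univ i, hβ⟩)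
      · intro hβ
        obtain ⟨i, hi, rfl⟩ := Finset.mem_image.1 hβ
        exact (Finset.mem_filter.1 hi).2
    have ht : ∀ j, (T.sum id).2 j = if j ∈ J then 1 else 0 := by
      intro j
      rw [sum_snd_apply, hTJ, Finset.sum_image (fun x _ y _ h => plus_root_injective h)]
      have h1' : ∀ i, (deltaW m + epsW i).2 j = (Pi.single i (1 : ℚ) : Fin m → ℚ) j := by
        intro i; simp [deltaW, epsW]
      rw [Finset.sum_congr rfl fun i _ => h1' i]
      exact Finset.sum_pi_single j (fun _ => (1 : ℚ)) J
    have hnuinj : ∀ i j : Fin m, f i - (T.sum id).2 i = f j - (T.sum id).2 j → i = j := by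
      intro i j hij
      rw [hsnd' i, hsnd' j] at hij
      exact (Equiv.injective w.1⁻¹) (hmu2.injective hij)
    have hnumem : ∀ j, f j - (T.sum id).2 j ∈ insert A S := by
      intro j; rw [hsnd' j]; exact humem _
    have himf : ∀ x ∈ insert A' S, ∃ j, f j = x := by
      intro x hx
      rw [← hlam3] at hx
      obtain ⟨j, _, hj⟩ := Finset.mem_image.1 hx
      exact ⟨j, hj⟩
    have hclaim1 : ∀ j ∈ J, f j ≤ A' := by
      by_contra hcon
      push_neg at hcon
      obtain ⟨j1, hj1J, hj1⟩ := hcon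
      obtain ⟨jm, hjm, hmin⟩ := Finset.exists_min_image
        (J.filter (fun j => A' < f j)) f ⟨j1, Finset.mem_filter.2 ⟨hj1J, hj1⟩⟩
      obtain ⟨hjmJ, hjm'⟩ := Finset.mem_filter.1 hjm
      have htjm : (T.sum id).2 jm = 1 := by rw [ht jm, if_pos hjmJ]
      have hx1 : A' + 1 ≤ f jm := HIp.add_one_le hA' (hfHI jm) hjm'
      have hmem1 : f jm - 1 ∈ insert A S := by
        have := hnumem jm; rwa [htjm] at this
      have hmemS : f jm - 1 ∈ S := by
        rcases Finset.mem_insert.1 hmem1 with hc | hc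
        · exfalso; linarith [hc ▸ (by linarith : A' ≤ f jm - 1)]
        · exact hc
      have hgt : A' < f jm - 1 := by
        rcases eq_or_lt_of_le (by linarith : A' ≤ f jm - 1) with hc | hc
        · exact absurd (hc ▸ hmemS) hA'S
        · exact hc
      obtain ⟨j2, hj2⟩ := himf (f jm - 1) (Finset.mem_insert_of_mem hmemS)
      by_cases hj2J : j2 ∈ J
      · have h5 := hmin j2 (Finset.mem_filter.2 ⟨hj2J, by rw [hj2]; exact hgt⟩)
        rw [hj2] at h5; linarith
      · have htj2 : (T.sum id).2 j2 = 0 := by rw [ht j2, if_neg hj2J]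
        have h5 : f j2 - (T.sum id).2 j2 = f jm - (T.sum id).2 jm := by
          rw [htj2, htjm, hj2]; ring
        have := hnuinj _ _ h5
        rw [this] at hj2; linarith
    have hclaim2 : ∀ j ∈ J, A < f j := by
      by_contra hcon
      push_neg at hcon
      obtain ⟨j1, hj1J, hj1⟩ := hcon
      obtain ⟨jm, hjm, hmin⟩ := Finset.exists_min_image
        (J.filter (fun j => f j ≤ A)) f ⟨j1, Finset.mem_filter.2 ⟨hj1J, hj1⟩⟩
      obtain ⟨hjmJ, hjm'⟩ := Finset.mem_filter.1 hjm
      have htjm : (T.sum id).2 jm = 1 := by rw [ht jm, if_pos hjmJ]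
      have hmem1 : f jm - 1 ∈ insert A S := by
        have := hnumem jm; rwa [htjm] at this
      have hpos1 : 0 < f jm - 1 := (hinsHI _ hmem1).pos
      have hmemS : f jm - 1 ∈ S := by
        rcases Finset.mem_insert.1 hmem1 with hc | hc
        · exfalso; linarith
        · exact hc
      obtain ⟨j2, hj2⟩ := himf (f jm - 1) (Finset.mem_insert_of_mem hmemS)
      by_cases hj2J : j2 ∈ J
      · have h5 := hmin j2 (Finset.mem_filter.2 ⟨hj2J, by rw [hj2]; linarith⟩)
        rw [hj2] at h5; linarith
      · have htj2 : (T.sum id).2 j2 = 0 := by rw [ht j2, if_neg hj2J]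
        have h5 : f j2 - (T.sum id).2 j2 = f jm - (T.sum id).2 jm := by
          rw [htj2, htjm, hj2]; ring
        have := hnuinj _ _ h5
        rw [this] at hj2; linarith
    have hclaim3 : ∀ j, A < f j → f j ≤ A' → j ∈ J := by
      by_contra hcon
      push_neg at hcon
      obtain ⟨j1, hj1a, hj1b, hj1J⟩ := hcon
      obtain ⟨jm, hjm, hmax⟩ := Finset.exists_max_image
        (Finset.univ.filter (fun j => (A < f j ∧ f j ≤ A') ∧ j ∉ J)) f
        ⟨j1, Finset.mem_filter.2 ⟨Finset.mem_univ j1, ⟨hj1a, hj1b⟩, hj1J⟩⟩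
      obtain ⟨-, ⟨hjma, hjmb⟩, hjmJ⟩ := Finset.mem_filter.1 hjm
      have htjm : (T.sum id).2 jm = 0 := by rw [ht jm, if_neg hjmJ]
      have hmem1 : f jm ∈ insert A S := by
        have := hnumem jm; rwa [htjm, sub_zero] at this
      have hmemS : f jm ∈ S := by
        rcases Finset.mem_insert.1 hmem1 with hc | hc
        · exact absurd hc (ne_of_gt hjma)
        · exact hc
      have hjmlt : f jm < A' := lt_of_le_of_ne hjmb (fun hc => hA'S (hc ▸ hmemS))
      have hx1 : f jm + 1 ≤ A' := HIp.add_one_le (hfHI jm) hA' hjmlt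
      have hx1mem : f jm + 1 ∈ insert A' S := by
        rcases eq_or_lt_of_le hx1 with hc | hc
        · rw [hc]; exact Finset.mem_insert_self _ _
        · exact Finset.mem_insert_of_mem
            (hbet _ ((hfHI jm).add_one) (by linarith) hc)
      obtain ⟨j2, hj2⟩ := himf (f jm + 1) hx1mem
      by_cases hj2J : j2 ∈ J
      · have htj2 : (T.sum id).2 j2 = 1 := by rw [ht j2, if_pos hj2J]
        have h5 : f j2 - (T.sum id).2 j2 = f jm - (T.sum id).2 jm := by
          rw [htj2, htjm, hj2]; ring
        have := hnuinj _ _ h5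
        rw [this] at hj2; linarith
      · have h5 := hmax j2 (Finset.mem_filter.2
          ⟨Finset.mem_univ j2, ⟨by rw [hj2]; linarith, by rw [hj2]; linarith⟩, hj2J⟩)
        rw [hj2] at h5; linarith
    have hJJ0 : J = J0 := by
      ext j
      rw [hJdef, hJ0def, Finset.mem_filter, Finset.mem_filter]
      constructor
      · intro hj
        have hj' : j ∈ J := by rw [hJdef]; exact Finset.mem_filter.2 hj
        exact ⟨Finset.mem_univ j, hclaim2 j hj', hclaim1 j hj'⟩
      · rintro ⟨-, h2, h3⟩
        have := hclaim3 j h2 h3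
        rw [hJdef] at this
        exact Finset.mem_filter.1 this
    have hTT0 : T = T0 := by
      rw [hTJ, hJJ0, hT0def]
    have hueq : ∀ j, u (w.1⁻¹ j) = u j := by
      intro j
      rw [← hsnd' j, ht j, hJJ0, hite j]
      exact congrFun hg_eq j
    have hw1 : w.1 = 1 := by
      apply Equiv.ext
      intro j
      have hinv : ∀ i, w.1⁻¹ i = i := fun i => hmu2.injective (hueq i)
      have h2 := hinv (w.1 j)
      rw [Equiv.Perm.inv_def, Equiv.symm_apply_apply] at h2
      rw [← h2]
      rfl
    refine ⟨hp0, hTT0, ?_⟩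
    rw [hw0def]
    exact Prod.ext hw1 (funext hwfalse)
  have hmain : bmult m lam mu
      = ∑ᶠ p : ℕ, ∑ T ∈ (Delta1 m).powerset, ∑ w : W0T m,
        if Regular m (lam - T.sum id - ((2 * p : ℕ) : ℚ) • deltaW m) ∧
            tilde m (lam - T.sum id - ((2 * p : ℕ) : ℚ) • deltaW m) = tact m w (tilde m mu)
          then sgn m w else 0 := by
    rw [bmult]
  rw [hmain, finsum_eq_single _ 0 ?hz]
  case hz =>
    intro p hp
    apply Finset.sum_eq_zero; intro T hT
    apply Finset.sum_eq_zero; intro w _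
    rw [if_neg]
    rintro ⟨-, he⟩
    exact hp ((huniq p T w (Finset.mem_powerset.1 hT) he).1)
  rw [Finset.sum_eq_single_of_mem T0 (Finset.mem_powerset.2 hT0sub) ?hT]
  case hT =>
    intro T hT hne
    apply Finset.sum_eq_zero; intro w _
    rw [if_neg]
    rintro ⟨-, he⟩
    exact hne ((huniq 0 T w (Finset.mem_powerset.1 hT) he).2.1)
  rw [Fintype.sum_eq_single w0 ?hw]
  case hw =>
    intro w hw
    rw [if_neg]
    rintro ⟨-, he⟩
    exact hw ((huniq 0 T0 w hT0sub he).2.2)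
  rw [if_pos ⟨hwitness_reg, hwitness_eq⟩, hw0def, sgn_one]
lemma isplus_struct (m : ℕ) (S' : Finset ℚ) (nu mu : Wt m) (A' : ℚ)
    (hfst : (tilde m nu).1 = A')
    (hinj : ∀ i j, |(tilde m nu).2 i| = |(tilde m nu).2 j| → i = j)
    (hmem : ∀ j, |(tilde m nu).2 j| ∈ insert A' S')
    (hsurj : ∀ x ∈ insert A' S', ∃ j, |(tilde m nu).2 j| = x)
    (hplus : IsPlus m nu mu) :
    (tilde m mu).1 = A' ∧ StrictAnti (tilde m mu).2 ∧
      Finset.univ.image (tilde m mu).2 = insert A' S' := by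
  obtain ⟨⟨hmono, hnonneg⟩, w, hw⟩ := hplus
  have hpos : ∀ j : Fin m, 0 < (tilde m mu).2 j := by
    intro j
    have h1 := hnonneg j
    have h2 : ((j : ℕ) : ℚ) ≤ (m : ℚ) - 1 := by
      have := j.2
      have : ((j : ℕ) : ℚ) + 1 ≤ (m : ℚ) := by exact_mod_cast this
      linarith
    show 0 < mu.2 j + (m : ℚ) - 1 / 2 - ((j : ℕ) : ℚ)
    linarith
  have hanti : StrictAnti (tilde m mu).2 := by
    intro i j hij
    have h1 := hmono i j hij.le
    have h2 : ((i : ℕ) : ℚ) < ((j : ℕ) : ℚ) := by exact_mod_cast hij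
    show mu.2 j + (m : ℚ) - 1 / 2 - ((j : ℕ) : ℚ) < mu.2 i + (m : ℚ) - 1 / 2 - ((i : ℕ) : ℚ)
    linarith
  have habs : ∀ j, (tilde m mu).2 j = |(tilde m nu).2 (w.1⁻¹ j)| := by
    intro j
    have h := congrFun (congrArg Prod.snd hw) j
    rw [tact_snd] at h
    have h2 : |(tilde m mu).2 j| = |(tilde m nu).2 (w.1⁻¹ j)| := by
      rw [h, abs_mul]
      by_cases hb : w.2 j <;> simp [hb]
    rw [← h2, abs_of_pos (hpos j)]
  have hfst' : (tilde m mu).1 = A' := by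
    have h := congrArg Prod.fst hw
    rw [tact_fst, hfst] at h
    exact h
  refine ⟨hfst', hanti, ?_⟩
  ext x
  constructor
  · intro hx
    obtain ⟨j, -, hj⟩ := Finset.mem_image.1 hx
    rw [habs j] at hj
    exact hj ▸ hmem _
  · intro hx
    obtain ⟨j, hj⟩ := hsurj x hx
    refine Finset.mem_image.2 ⟨w.1 j, Finset.mem_univ _, ?_⟩
    rw [habs (w.1 j), Equiv.Perm.inv_def, Equiv.symm_apply_apply, hj]

lemma step_lemma (m : ℕ) (S : Finset ℚ) (hS : ∀ x ∈ S, HIp x)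
    (lam mu : Wt m) (A : ℚ) (hA : HIp A) (hAS : A ∉ S)
    (h1 : (tilde m lam).1 = A) (h2 : StrictAnti (tilde m lam).2)
    (h3 : Finset.univ.image (tilde m lam).2 = insert A S)
    (hhat : IsHat m lam mu) :
    ∃ A', HIp A' ∧ A' ∉ S ∧ A < A' ∧
      (∀ x, HIp x → A < x → x < A' → x ∈ S) ∧
      (tilde m mu).1 = A' ∧ StrictAnti (tilde m mu).2 ∧
      Finset.univ.image (tilde m mu).2 = insert A' S := by
  set f := (tilde m lam).2 with hfdef
  have hfmem : ∀ j, f j ∈ insert A S := by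
    intro j; rw [← h3]; exact Finset.mem_image_of_mem _ (Finset.mem_univ j)
  have hfHI : ∀ j, HIp (f j) := by
    intro j
    rcases Finset.mem_insert.1 (hfmem j) with hc | hc
    · exact hc ▸ hA
    · exact hS _ hc
  have hfpos : ∀ j, 0 < f j := fun j => (hfHI j).pos
  have himf : ∀ x ∈ insert A S, ∃ j, f j = x := by
    intro x hx
    rw [← h3] at hx
    obtain ⟨j, -, hj⟩ := Finset.mem_image.1 hx
    exact ⟨j, hj⟩
  obtain ⟨γ, ⟨l, hroot⟩, q, hqpos, hreg, hminreg, hplus⟩ := hhat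
  rcases hroot with ⟨rfl, hl⟩ | ⟨rfl, hl⟩
  swap
  · exfalso
    rw [h1] at hl
    have := hfpos l
    have := hA.pos
    rw [show (tilde m lam).2 l = f l from rfl] at hl
    linarith
  rw [h1] at hl
  have hfl : f l = A := hl.symm
  have hy : ∀ (c : ℚ) (j : Fin m),
      (tilde m (lam + c • (deltaW m + epsW l))).2 j
        = f j + c * (if l = j then 1 else 0) := by
    intro c j
    rw [tilde_add_smul_snd, plus_root_snd]
  have hyfst : ∀ c : ℚ, (tilde m (lam + c • (deltaW m + epsW l))).1 = A + c := by
    intro c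
    rw [tilde_add_smul_fst, h1]
    have : (deltaW m + epsW l).1 = 1 := by simp [deltaW, epsW]
    rw [this, mul_one]
  set A' : ℚ := A + q with hA'def
  have hqpos' : (0 : ℚ) < q := by exact_mod_cast hqpos
  have hAA' : A < A' := by rw [hA'def]; linarith
  have hA'HI : HIp A' := by
    obtain ⟨n, hn⟩ := hA
    exact ⟨n + q, by rw [hA'def, hn]; push_cast; ring⟩
  have hνl : (tilde m (lam + (q : ℚ) • (deltaW m + epsW l))).2 l = A' := by
    rw [hy, if_pos rfl, hfl, mul_one, hA'def]
  have hνj : ∀ j, j ≠ l → (tilde m (lam + (q : ℚ) • (deltaW m + epsW l))).2 j = f j := by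
    intro j hj
    rw [hy, if_neg (Ne.symm hj), mul_zero, add_zero]
  have hfjS : ∀ j, j ≠ l → f j ∈ S := by
    intro j hj
    rcases Finset.mem_insert.1 (hfmem j) with hc | hc
    · exact absurd (h2.injective (hc.trans hfl.symm)) hj
    · exact hc
  have hA'S : A' ∉ S := by
    intro hc
    obtain ⟨j, hj⟩ := himf A' (Finset.mem_insert_of_mem hc)
    have hjl : j ≠ l := by
      intro h
      rw [h, hfl] at hj
      linarith
    apply hjl
    apply hreg j l
    rw [hνl, hνj j hjl, hj, abs_of_pos (by linarith [hA.pos] : (0:ℚ) < A')]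
  have hbet : ∀ x, HIp x → A < x → x < A' → x ∈ S := by
    intro x hx hax hxa'
    have hApos := hA.pos
    obtain ⟨nx, hnx⟩ := hx
    obtain ⟨nA, hnA⟩ := hA
    have hnlt : nA < nx := by
      have : (nA : ℚ) < nx := by rw [hnA, hnx] at hax; linarith
      exact_mod_cast this
    set b : ℕ := nx - nA with hbdef
    have hbq : (b : ℚ) = x - A := by
      rw [hbdef, Nat.cast_sub hnlt.le, hnx, hnA]; ring
    have hbpos : 0 < b := by omega
    have hblt : b < q := by
      have : (b : ℚ) < q := by rw [hbq, hA'def] at *; linarith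
      exact_mod_cast this
    have hnr := hminreg b hbpos hblt
    rw [Regular] at hnr
    push_neg at hnr
    obtain ⟨i, j, hij, hne⟩ := hnr
    have hz : ∀ k, (tilde m (lam + (b : ℚ) • (deltaW m + epsW l))).2 k
        = if l = k then x else f k := by
      intro k
      rw [hy]
      by_cases hk : l = k
      · rw [if_pos hk, if_pos hk, ← hk, hfl]; linarith [hbq]
      · rw [if_neg hk, if_neg hk, mul_zero, add_zero]
    have hxpos : (0:ℚ) < x := by linarith
    have hkey : ∀ k, k ≠ l → |x| = |f k| → x ∈ S := by
      intro k hk habs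
      rw [abs_of_pos hxpos, abs_of_pos (hfpos k)] at habs
      exact habs ▸ hfjS k hk
    rw [hz i, hz j] at hij
    by_cases hil : l = i <;> by_cases hjl : l = j
    · exact absurd (hil.symm.trans hjl) hne
    · rw [if_pos hil, if_neg hjl] at hij
      exact hkey j (Ne.symm hjl) hij
    · rw [if_neg hil, if_pos hjl] at hij
      exact hkey i (Ne.symm hil) hij.symm
    · rw [if_neg hil, if_neg hjl] at hij
      rw [abs_of_pos (hfpos i), abs_of_pos (hfpos j)] at hij
      exact absurd (h2.injective hij) hne
  have hres := isplus_struct m S (lam + (q : ℚ) • (deltaW m + epsW l)) mu A'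
    (hyfst q) hreg ?_ ?_ hplus
  · exact ⟨A', hA'HI, hA'S, hAA', hbet, hres.1, hres.2.1, hres.2.2⟩
  · intro j
    by_cases hjl : j = l
    · rw [hjl, hνl, abs_of_pos (by linarith [hA.pos])]
      exact Finset.mem_insert_self _ _
    · rw [hνj j hjl, abs_of_pos (hfpos j)]
      exact Finset.mem_insert_of_mem (hfjS j hjl)
  · intro x hx
    rcases Finset.mem_insert.1 hx with hc | hxS
    · refine ⟨l, ?_⟩
      rw [hνl, abs_of_pos (by linarith [hA.pos] : (0:ℚ) < A'), hc]
    · obtain ⟨j, hj⟩ := himf x (Finset.mem_insert_of_mem hxS)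
      have hjl : j ≠ l := by
        intro h
        rw [h, hfl] at hj
        exact hAS (hj ▸ hxS)
      exact ⟨j, by rw [hνj j hjl, abs_of_pos (hfpos j), hj]⟩
lemma base_lemma (m : ℕ) (S : Finset ℚ) (hS : ∀ x ∈ S, HIp x)
    (lam mu : Wt m) (a : ℚ) (ha : HIp a) (haS : a ∉ S)
    (hmin : ∀ b, HIp b → b ∉ S → a ≤ b)
    (h1 : (tilde m lam).1 = -a) (h2 : StrictAnti (tilde m lam).2)
    (h3 : Finset.univ.image (tilde m lam).2 = insert a S)
    (hhat : IsHat m lam mu) :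
    ∃ A1, HIp A1 ∧ A1 ∉ S ∧
      (tilde m mu).1 = A1 ∧ StrictAnti (tilde m mu).2 ∧
      Finset.univ.image (tilde m mu).2 = insert A1 S := by
  set f := (tilde m lam).2 with hfdef
  have hapos := ha.pos
  have hfmem : ∀ j, f j ∈ insert a S := by
    intro j; rw [← h3]; exact Finset.mem_image_of_mem _ (Finset.mem_univ j)
  have hfHI : ∀ j, HIp (f j) := by
    intro j
    rcases Finset.mem_insert.1 (hfmem j) with hc | hc
    · exact hc ▸ ha
    · exact hS _ hc
  have hfpos : ∀ j, 0 < f j := fun j => (hfHI j).pos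
  have himf : ∀ x ∈ insert a S, ∃ j, f j = x := by
    intro x hx
    rw [← h3] at hx
    obtain ⟨j, -, hj⟩ := Finset.mem_image.1 hx
    exact ⟨j, hj⟩
  obtain ⟨γ, ⟨l, hroot⟩, q, hqpos, hreg, hminreg, hplus⟩ := hhat
  rcases hroot with ⟨rfl, hl⟩ | ⟨rfl, hl⟩
  · exfalso
    rw [h1] at hl
    have := hfpos l
    rw [show (tilde m lam).2 l = f l from rfl] at hl
    linarith
  rw [h1, neg_inj] at hl
  have hfl : f l = a := hl.symm
  have hy : ∀ (c : ℚ) (j : Fin m),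
      (tilde m (lam + c • (deltaW m - epsW l))).2 j
        = f j + c * (if l = j then -1 else 0) := by
    intro c j
    rw [tilde_add_smul_snd, minus_root_snd]
  have hyfst : ∀ c : ℚ, (tilde m (lam + c • (deltaW m - epsW l))).1 = -a + c := by
    intro c
    rw [tilde_add_smul_fst, h1]
    have : (deltaW m - epsW l).1 = 1 := by simp [deltaW, epsW]
    rw [this, mul_one]
  have hνl : (tilde m (lam + (q : ℚ) • (deltaW m - epsW l))).2 l = a - q := by
    rw [hy, if_pos rfl, hfl]; ring
  have hνj : ∀ j, j ≠ l → (tilde m (lam + (q : ℚ) • (deltaW m - epsW l))).2 j = f j := by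
    intro j hj
    rw [hy, if_neg (Ne.symm hj), mul_zero, add_zero]
  have hfjS : ∀ j, j ≠ l → f j ∈ S := by
    intro j hj
    rcases Finset.mem_insert.1 (hfmem j) with hc | hc
    · exact absurd (h2.injective (hc.trans hfl.symm)) hj
    · exact hc
  obtain ⟨n, hn⟩ := ha
  have hqa : a < q := by
    have hq_ne : (q : ℚ) ≠ a := by
      intro hc
      rw [hn] at hc
      have h2q : ((2 * q : ℕ) : ℚ) = ((2 * n + 1 : ℕ) : ℚ) := by push_cast; linarith
      have : 2 * q = 2 * n + 1 := by exact_mod_cast h2q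
      omega
    rcases lt_trichotomy (q : ℚ) a with hc | hc | hc
    · exfalso
      have hqn : q ≤ n := by
        by_contra hq
        push_neg at hq
        have : (n : ℚ) + 1 ≤ q := by exact_mod_cast hq
        rw [hn] at hc; linarith
      set v : ℚ := a - q with hvdef
      have hvpos : 0 < v := by rw [hvdef]; linarith
      have hvHI : HIp v := ⟨n - q, by rw [hvdef, hn, Nat.cast_sub hqn]; ring⟩
      have hvS : v ∈ S := by
        by_contra hvS
        have := hmin v hvHI hvS
        have : (0:ℚ) < q := by exact_mod_cast hqpos
        rw [hvdef] at *
        linarith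
      obtain ⟨j, hj⟩ := himf v (Finset.mem_insert_of_mem hvS)
      have hjl : j ≠ l := by
        intro hjc
        rw [hjc, hfl] at hj
        have : (0:ℚ) < q := by exact_mod_cast hqpos
        rw [hvdef] at hj
        linarith
      apply hjl
      apply hreg j l
      rw [hνl, hνj j hjl, hj, abs_of_pos hvpos]
    · exact absurd hc hq_ne
    · exact hc
  set A1 : ℚ := q - a with hA1def
  have hA1pos : 0 < A1 := by rw [hA1def]; linarith
  have hA1HI : HIp A1 := by
    have hq1 : n + 1 ≤ q := by
      by_contra hq
      push_neg at hq
      have : q ≤ n := by omega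
      have : (q : ℚ) ≤ n := by exact_mod_cast this
      rw [hn] at hqa; linarith
    exact ⟨q - (n + 1), by rw [hA1def, hn, Nat.cast_sub hq1]; push_cast; ring⟩
  have hνlabs : |(tilde m (lam + (q : ℚ) • (deltaW m - epsW l))).2 l| = A1 := by
    rw [hνl, abs_of_neg (by linarith : a - q < 0), hA1def]; ring
  have hA1S : A1 ∉ S := by
    intro hc
    obtain ⟨j, hj⟩ := himf A1 (Finset.mem_insert_of_mem hc)
    have hjl : j ≠ l := by
      intro hjc
      rw [hjc, hfl] at hj
      exact haS (hj ▸ hc)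
    apply hjl
    apply hreg j l
    rw [hνlabs, hνj j hjl, hj, abs_of_pos hA1pos]
  have hres := isplus_struct m S (lam + (q : ℚ) • (deltaW m - epsW l)) mu A1
    (by rw [hyfst q, hA1def]; ring) hreg ?_ ?_ hplus
  · exact ⟨A1, hA1HI, hA1S, hres.1, hres.2.1, hres.2.2⟩
  · intro j
    by_cases hjl : j = l
    · rw [hjl, hνlabs]
      exact Finset.mem_insert_self _ _
    · rw [hνj j hjl, abs_of_pos (hfpos j)]
      exact Finset.mem_insert_of_mem (hfjS j hjl)
  · intro x hx
    rcases Finset.mem_insert.1 hx with hc | hxS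
    · refine ⟨l, ?_⟩
      rw [hνlabs, hc]
    · obtain ⟨j, hj⟩ := himf x (Finset.mem_insert_of_mem hxS)
      have hjl : j ≠ l := by
        intro hjc
        rw [hjc, hfl] at hj
        exact haS (hj ▸ hxS)
      exact ⟨j, by rw [hνj j hjl, abs_of_pos (hfpos j), hj]⟩

/-- the computation `b_{λ⁽ⁱ⁾,λ⁽ⁱ⁻¹⁾} = 1` in the proof of
Theorem 3.10 for `k = 2m+1`: with `λ⁽⁰⁾` as in the context (atypicality type
`S`, `λ̃⁽⁰⁾ = (−a | S ∪ {a} in decreasing order)`) and `λ⁽ⁱ⁾ = (λ⁽ⁱ⁻¹⁾)^`,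
one has `b(λ⁽ⁱ⁾, λ⁽ⁱ⁻¹⁾) = 1` for every `i ≥ 2`. -/
theorem bmult_consecutive_eq_one (m : ℕ) (hm : 1 ≤ m)
    (S : Finset ℚ) (hcard : S.card = m - 1)
    (hS : ∀ x ∈ S, ∃ n : ℕ, x = (n : ℚ) + 1 / 2)
    (a : ℚ) (ha : ∃ n : ℕ, a = (n : ℚ) + 1 / 2) (haS : a ∉ S)
    (hmin : ∀ b : ℚ, (∃ n : ℕ, b = (n : ℚ) + 1 / 2) → b ∉ S → a ≤ b)
    (lamSeq : ℕ → Wt m)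
    (h1 : (tilde m (lamSeq 0)).1 = -a)
    (h2 : (Finset.univ.image fun i => (tilde m (lamSeq 0)).2 i) = insert a S)
    (h3 : ∀ i j : Fin m, i < j →
      (tilde m (lamSeq 0)).2 j < (tilde m (lamSeq 0)).2 i)
    (hhat : ∀ i : ℕ, IsHat m (lamSeq i) (lamSeq (i + 1))) :
    ∀ i : ℕ, 2 ≤ i → bmult m (lamSeq i) (lamSeq (i - 1)) = 1 := by
  have hS' : ∀ x ∈ S, HIp x := hS
  have ha' : HIp a := ha
  have hmin' : ∀ b, HIp b → b ∉ S → a ≤ b := hmin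
  have h2' : Finset.univ.image (tilde m (lamSeq 0)).2 = insert a S := h2
  have h3' : StrictAnti (tilde m (lamSeq 0)).2 := fun i j hij => h3 i j hij
  have hstruct : ∀ k : ℕ, ∃ A, HIp A ∧ A ∉ S ∧
      (tilde m (lamSeq (k + 1))).1 = A ∧ StrictAnti (tilde m (lamSeq (k + 1))).2 ∧
      Finset.univ.image (tilde m (lamSeq (k + 1))).2 = insert A S := by
    intro k
    induction k with
    | zero =>
      obtain ⟨A1, hA1, hA1S, hfst, hanti, him⟩ :=
        base_lemma m S hS' (lamSeq 0) (lamSeq 1) a ha' haS hmin' h1 h3' h2' (hhat 0)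
      exact ⟨A1, hA1, hA1S, hfst, hanti, him⟩
    | succ k ih =>
      obtain ⟨A, hA, hAS2, hfst, hanti, him⟩ := ih
      obtain ⟨A', hA', hA'S, -, -, hfst', hanti', him'⟩ :=
        step_lemma m S hS' (lamSeq (k + 1)) (lamSeq (k + 2)) A hA hAS2 hfst hanti him
          (hhat (k + 1))
      exact ⟨A', hA', hA'S, hfst', hanti', him'⟩
  intro i hi
  obtain ⟨A, hA, hAS2, hfst, hanti, him⟩ := hstruct (i - 2)
  rw [show i - 2 + 1 = i - 1 from by omega] at hfst hanti him
  have hhat' : IsHat m (lamSeq (i - 1)) (lamSeq i) := by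
    have := hhat (i - 1)
    rwa [show i - 1 + 1 = i from by omega] at this
  obtain ⟨A', hA', hA'S, hlt, hbet, hfst', hanti', him'⟩ :=
    step_lemma m S hS' (lamSeq (i - 1)) (lamSeq i) A hA hAS2 hfst hanti him hhat'
  exact bmult_eq_one' m S hS' (lamSeq i) (lamSeq (i - 1)) A A' hA hA' hAS2 hA'S hlt hbet
    hfst hanti him hfst' hanti' him'

end
end
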